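/- arXiv:1609.08311 — 2 statements merged into one kernel-verified Lean document; each statement's English description precedes it below -/
import Mathlib

section
/- Suppose a finite group A acts coprimely on a finite group G, that G is p-solvable for a prime p, and that A centralizes some Sylow p-subgroup of G. Then [G, A] ≤ O_{p'}(G), the largest normal subgroup of G of order coprime to p. -/
/-- A subgroup is subnormal if it is a term of a finite chain of subgroups,
each normal in the next, ending at the whole group. -/
def Subgroup.IsSubnormalIn {G : Type*} [Group G] (H : Subgroup G) : Prop :=
  ∃ (n : ℕ) (c : Fin (n + 1) → Subgroup G),
    c 0 = H ∧ c (Fin.last n) = ⊤ ∧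
    ∀ i : Fin n, c i.castSucc ≤ c i.succ ∧ ((c i.castSucc).subgroupOf (c i.succ)).Normal

/-- A group is quasisimple if it is perfect and its quotient by its center is simple. -/
def IsQuasisimple (H : Type*) [Group H] : Prop :=
  (⁅(⊤ : Subgroup H), (⊤ : Subgroup H)⁆ = ⊤) ∧ IsSimpleGroup (H ⧸ Subgroup.center H)

/-- A component of a group is a quasisimple subnormal subgroup. -/
def Subgroup.IsComponent {G : Type*} [Group G] (K : Subgroup G) : Prop :=
  K.IsSubnormalIn ∧ IsQuasisimple K

/-- `sol G` : the subgroup generated by all normal solvable subgroups of `G`;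
for finite `G` this is the largest normal solvable subgroup. -/
def sol (G : Type*) [Group G] : Subgroup G :=
  Subgroup.closure {x : G | ∃ N : Subgroup G, N.Normal ∧ IsSolvable N ∧ x ∈ N}

instance sol_normal (G : Type*) [Group G] : (sol G).Normal := by
  constructor
  intro n hn g
  induction hn using Subgroup.closure_induction with
  | mem x hx =>
      obtain ⟨N, hN, hNs, hxN⟩ := hx
      exact Subgroup.subset_closure ⟨N, hN, hNs, hN.conj_mem x hxN g⟩
  | one => simpa using (sol G).one_mem
  | mul x y _ _ hx hy =>
      have : g * (x * y) * g⁻¹ = (g * x * g⁻¹) * (g * y * g⁻¹) := by group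
      rw [this]; exact (sol G).mul_mem hx hy
  | inv x _ hx =>
      have : g * x⁻¹ * g⁻¹ = (g * x * g⁻¹)⁻¹ := by group
      rw [this]; exact (sol G).inv_mem hx

/-- A sol-component of `G`: a perfect subnormal subgroup whose image in `G/sol(G)`
is a component of `G/sol(G)`. -/
def Subgroup.IsSolComponent {G : Type*} [Group G] (K : Subgroup G) : Prop :=
  ⁅K, K⁆ = K ∧ K.IsSubnormalIn ∧
    (K.map (QuotientGroup.mk' (sol G))).IsComponent

/-- The subgroup generated by the sol-components. -/
def layerSol (G : Type*) [Group G] : Subgroup G :=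
  Subgroup.closure {x : G | ∃ K : Subgroup G, K.IsSolComponent ∧ x ∈ K}

/-- `O*(G) = sol(G) · layerSol(G)`. -/
def Ostar (G : Type*) [Group G] : Subgroup G := sol G ⊔ layerSol G

/-- The Fitting subgroup: the subgroup generated by all nilpotent normal subgroups. -/
def fitting (G : Type*) [Group G] : Subgroup G :=
  Subgroup.closure {x : G | ∃ N : Subgroup G, N.Normal ∧ Group.IsNilpotent N ∧ x ∈ N}

/-- The layer `E(G)`: the subgroup generated by all components. -/
def layer (G : Type*) [Group G] : Subgroup G :=
  Subgroup.closure {x : G | ∃ K : Subgroup G, K.IsComponent ∧ x ∈ K}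

/-- The generalized Fitting subgroup `F*(G) = F(G)E(G)`. -/
def Fstar (G : Type*) [Group G] : Subgroup G := fitting G ⊔ layer G

/-- `O_p(G)` : the subgroup generated by all normal `p`-subgroups of `G`. -/
def pCore (p : ℕ) (G : Type*) [Group G] : Subgroup G :=
  Subgroup.closure {x : G | ∃ N : Subgroup G, N.Normal ∧ IsPGroup p N ∧ x ∈ N}

/-- The subgroup of fixed points of the action of `a` on `G`. -/
def fixedSub {A : Type*} (G : Type*) [Group A] [Group G] [MulDistribMulAction A G]
    (a : A) : Subgroup G where
  carrier := {g : G | a • g = g}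
  one_mem' := smul_one a
  mul_mem' := by
    intro x y hx hy
    simp only [Set.mem_setOf_eq] at *
    rw [smul_mul', hx, hy]
  inv_mem' := by
    intro x hx
    simp only [Set.mem_setOf_eq] at *
    rw [smul_inv', hx]

/-- The commutator `[G, A]` of a group `G` with a group `A` acting on it:
the subgroup generated by all `g⁻¹ • (a • g)`. -/
def actCommutator (A G : Type*) [Group A] [Group G] [MulDistribMulAction A G] :
    Subgroup G :=
  Subgroup.closure {x : G | ∃ (g : G) (a : A), x = g⁻¹ * (a • g)}

/-- A finite group `G` is `p`-solvable if it has a subnormal series in which every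
factor is a `p`-group or a group of order coprime to `p` (orders of factors are
expressed via relative indices). -/
def IsPSolvable (p : ℕ) (G : Type*) [Group G] : Prop :=
  ∃ (n : ℕ) (c : Fin (n + 1) → Subgroup G),
    c 0 = ⊥ ∧ c (Fin.last n) = ⊤ ∧
    ∀ i : Fin n,
      c i.castSucc ≤ c i.succ ∧ ((c i.castSucc).subgroupOf (c i.succ)).Normal ∧
        ((∃ k, (c i.castSucc).relIndex (c i.succ) = p ^ k) ∨
          ((c i.castSucc).relIndex (c i.succ)).Coprime p)

/-- The largest normal subgroup of `G` of order coprime to `p`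
(as the subgroup generated by all normal subgroups of order coprime to `p`). -/
def pPrimeCore (p : ℕ) (G : Type*) [Group G] : Subgroup G :=
  Subgroup.closure {x : G | ∃ N : Subgroup G, N.Normal ∧ (Nat.card N).Coprime p ∧ x ∈ N}

section Chunk1

open Subgroup
open scoped Pointwise

variable {G : Type*} [Group G] {p : ℕ}

lemma normal_subgroupOf_of_conj {H K : Subgroup G}
    (h : ∀ g ∈ K, ∀ x ∈ H, g * x * g⁻¹ ∈ H) : (H.subgroupOf K).Normal := by
  constructor
  rintro ⟨n, hnK⟩ hn ⟨g, hg⟩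
  simp only [Subgroup.mem_subgroupOf] at hn ⊢
  exact h g hg n hn

lemma conj_mem_of_subgroupOf_normal {H K : Subgroup G}
    (hn : (H.subgroupOf K).Normal) (hHK : H ≤ K) :
    ∀ g ∈ K, ∀ x ∈ H, g * x * g⁻¹ ∈ H := by
  intro g hg x hx
  have := hn.conj_mem ⟨x, hHK hx⟩ (by simpa [Subgroup.mem_subgroupOf] using hx) ⟨g, hg⟩
  simpa [Subgroup.mem_subgroupOf] using this

lemma le_pPrimeCore {N : Subgroup G} (hN : N.Normal) (hc : (Nat.card N).Coprime p) :
    N ≤ pPrimeCore p G := fun x hx => Subgroup.subset_closure ⟨N, hN, hc, hx⟩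

lemma le_pCore {N : Subgroup G} (hN : N.Normal) (hc : IsPGroup p N) :
    N ≤ pCore p G := fun x hx => Subgroup.subset_closure ⟨N, hN, hc, hx⟩

private lemma closure_core_normal (Pr : Subgroup G → Prop) :
    (Subgroup.closure {x : G | ∃ N : Subgroup G, N.Normal ∧ Pr N ∧ x ∈ N}).Normal := by
  constructor
  intro n hn g
  induction hn using Subgroup.closure_induction with
  | mem x hx =>
      obtain ⟨N, hN, hPr, hxN⟩ := hx
      exact Subgroup.subset_closure ⟨N, hN, hPr, hN.conj_mem x hxN g⟩
  | one => simpa using Subgroup.one_mem _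
  | mul x y _ _ hx hy =>
      have : g * (x * y) * g⁻¹ = (g * x * g⁻¹) * (g * y * g⁻¹) := by group
      rw [this]; exact Subgroup.mul_mem _ hx hy
  | inv x _ hx =>
      have : g * x⁻¹ * g⁻¹ = (g * x * g⁻¹)⁻¹ := by group
      rw [this]; exact Subgroup.inv_mem _ hx

instance pPrimeCore_normal : (pPrimeCore p G).Normal := by
  unfold pPrimeCore; exact closure_core_normal _

instance pCore_normal : (pCore p G).Normal := by
  unfold pCore; exact closure_core_normal _

private lemma closure_core_map_equiv (Pr : Subgroup G → Prop)
    (hPr : ∀ (e : G ≃* G) (N : Subgroup G), Pr N → Pr (N.map e.toMonoidHom))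
    (e : G ≃* G) {x : G}
    (hx : x ∈ Subgroup.closure {x : G | ∃ N : Subgroup G, N.Normal ∧ Pr N ∧ x ∈ N}) :
    e x ∈ Subgroup.closure {x : G | ∃ N : Subgroup G, N.Normal ∧ Pr N ∧ x ∈ N} := by
  induction hx using Subgroup.closure_induction with
  | mem y hy =>
      obtain ⟨N, hN, hPr', hyN⟩ := hy
      exact Subgroup.subset_closure
        ⟨N.map e.toMonoidHom, hN.map _ e.surjective, hPr e N hPr', ⟨y, hyN, rfl⟩⟩
  | one => simpa using Subgroup.one_mem _
  | mul x y _ _ hx hy => rw [map_mul]; exact Subgroup.mul_mem _ hx hy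
  | inv x _ hx => rw [map_inv]; exact Subgroup.inv_mem _ hx

lemma pPrimeCore_map_equiv (e : G ≃* G) {x : G} (hx : x ∈ pPrimeCore p G) :
    e x ∈ pPrimeCore p G := by
  unfold pPrimeCore at hx ⊢
  refine closure_core_map_equiv _ (fun e N h => ?_) e hx
  rwa [← Nat.card_congr (N.equivMapOfInjective e.toMonoidHom e.injective).toEquiv]

lemma pCore_map_equiv (e : G ≃* G) {x : G} (hx : x ∈ pCore p G) :
    e x ∈ pCore p G := by
  unfold pCore at hx ⊢
  exact closure_core_map_equiv _ (fun e N h => h.map e.toMonoidHom) e hx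

lemma card_sup_dvd [Finite G] {H K : Subgroup G} (hK : K.Normal) :
    Nat.card ↥(H ⊔ K) ∣ Nat.card H * Nat.card K := by
  haveI := hK
  set J := H ⊔ K with hJ
  have hKJ : K ≤ J := le_sup_right
  haveI hK' : (K.subgroupOf J).Normal :=
    normal_subgroupOf_of_conj (fun g _ x hx => hK.conj_mem x hx g)
  have hcard : Nat.card J = Nat.card (J ⧸ K.subgroupOf J) * Nat.card (K.subgroupOf J) :=
    Subgroup.card_eq_card_quotient_mul_card_subgroup _
  have hcardK : Nat.card (K.subgroupOf J) = Nat.card K :=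
    Nat.card_congr (Subgroup.subgroupOfEquivOfLe hKJ).toEquiv
  have hdvd : Nat.card (J ⧸ K.subgroupOf J) ∣ Nat.card H := by
    refine Subgroup.card_dvd_of_surjective
      ((QuotientGroup.mk' (K.subgroupOf J)).comp (Subgroup.inclusion (le_sup_left : H ≤ J))) ?_
    intro q
    refine QuotientGroup.induction_on q fun x => ?_
    have hx : (x : G) ∈ (H : Set G) * (K : Set G) := by
      rw [← Subgroup.mul_normal]; exact x.2
    obtain ⟨h, hh, k, hk, hhk⟩ := hx
    have hhJ : h ∈ J := (le_sup_left : H ≤ J) hh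
    refine ⟨⟨h, hh⟩, ?_⟩
    show ((⟨h, hhJ⟩ : J) : ↥J ⧸ K.subgroupOf J) = (x : ↥J ⧸ K.subgroupOf J)
    rw [QuotientGroup.eq]
    rw [Subgroup.mem_subgroupOf]
    show h⁻¹ * (x : G) ∈ K
    rw [← hhk]
    simpa using hk
  calc Nat.card J = Nat.card (J ⧸ K.subgroupOf J) * Nat.card K := by rw [hcard, hcardK]
    _ ∣ Nat.card H * Nat.card K := Nat.mul_dvd_mul_right hdvd _

lemma pPrimeCore_card_coprime [Finite G] : (Nat.card (pPrimeCore p G)).Coprime p := by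
  classical
  haveI : Finite (Subgroup G) :=
    Finite.of_injective (fun H : Subgroup G => (H : Set G)) SetLike.coe_injective
  set S : Finset (Subgroup G) :=
    (Set.toFinite {N : Subgroup G | N.Normal ∧ (Nat.card N).Coprime p}).toFinset with hSdef
  have hmem : ∀ N : Subgroup G, N ∈ S ↔ N.Normal ∧ (Nat.card N).Coprime p := by
    intro N; simp [hSdef]
  have hS : pPrimeCore p G = S.sup id := by
    apply le_antisymm
    · unfold pPrimeCore; rw [Subgroup.closure_le]
      rintro x ⟨N, hN, hc, hx⟩
      have hle : N ≤ S.sup id := Finset.le_sup (f := id) ((hmem N).mpr ⟨hN, hc⟩)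
      exact hle hx
    · exact Finset.sup_le fun N hN => le_pPrimeCore ((hmem N).mp hN).1 ((hmem N).mp hN).2
  rw [hS]
  have : (S.sup id).Normal ∧ (Nat.card ↥(S.sup id)).Coprime p := by
    refine Finset.sup_induction (p := fun N : Subgroup G => N.Normal ∧ (Nat.card ↥N).Coprime p)
      ⟨inferInstance, by simp⟩ ?_ (fun N hN => (hmem N).mp hN)
    rintro a ⟨ha1, ha2⟩ b ⟨hb1, hb2⟩
    haveI := ha1; haveI := hb1
    refine ⟨inferInstance, Nat.Coprime.coprime_dvd_left (card_sup_dvd hb1) ?_⟩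
    exact (ha2.symm.mul_right hb2.symm).symm
  exact this.2

lemma pCore_isPGroup [Finite G] : IsPGroup p (pCore p G) := by
  classical
  haveI : Finite (Subgroup G) :=
    Finite.of_injective (fun H : Subgroup G => (H : Set G)) SetLike.coe_injective
  set S : Finset (Subgroup G) :=
    (Set.toFinite {N : Subgroup G | N.Normal ∧ IsPGroup p N}).toFinset with hSdef
  have hmem : ∀ N : Subgroup G, N ∈ S ↔ N.Normal ∧ IsPGroup p N := by
    intro N; simp [hSdef]
  have hS : pCore p G = S.sup id := by
    apply le_antisymm
    · unfold pCore; rw [Subgroup.closure_le]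
      rintro x ⟨N, hN, hc, hx⟩
      have hle : N ≤ S.sup id := Finset.le_sup (f := id) ((hmem N).mpr ⟨hN, hc⟩)
      exact hle hx
    · exact Finset.sup_le fun N hN => le_pCore ((hmem N).mp hN).1 ((hmem N).mp hN).2
  rw [hS]
  have : (S.sup id).Normal ∧ IsPGroup p ↥(S.sup id) := by
    refine Finset.sup_induction (p := fun N : Subgroup G => N.Normal ∧ IsPGroup p ↥N)
      ⟨inferInstance, IsPGroup.of_bot⟩ ?_ (fun N hN => (hmem N).mp hN)
    rintro a ⟨ha1, ha2⟩ b ⟨hb1, hb2⟩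
    haveI := ha1; haveI := hb1
    exact ⟨inferInstance, ha2.to_sup_of_normal_right hb2⟩
  exact this.2

lemma pCore_le_sylow [Finite G] (P : Sylow p G) : pCore p G ≤ P := by
  have hsup : IsPGroup p ↥((P : Subgroup G) ⊔ pCore p G) :=
    P.isPGroup'.to_sup_of_normal_right pCore_isPGroup
  have := P.is_maximal' hsup le_sup_left
  rw [← this]
  exact le_sup_right

end Chunk1
section Chunk2

variable {A G : Type*} [Group A] [Group G] [MulDistribMulAction A G]

/-- Restriction of a `MulDistribMulAction` to an invariant subgroup. -/
def subMulDistribMulAction (H : Subgroup G) (hH : ∀ (a : A), ∀ x ∈ H, a • x ∈ H) :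
    MulDistribMulAction A ↥H where
  smul a x := ⟨a • (x : G), hH a x x.2⟩
  one_smul x := Subtype.ext (one_smul A (x : G))
  mul_smul a b x := Subtype.ext (mul_smul a b (x : G))
  smul_mul a x y := Subtype.ext (smul_mul' a (x : G) (y : G))
  smul_one a := Subtype.ext (smul_one a)

lemma subMulDistribMulAction_coe_smul (H : Subgroup G) (hH : ∀ (a : A), ∀ x ∈ H, a • x ∈ H)
    (a : A) (x : ↥H) :
    ((((subMulDistribMulAction H hH).toMulAction.toSMul.smul a x) : ↥H) : G) = a • (x : G) := rfl

/-- Descent of a `MulDistribMulAction` to the quotient by an invariant normal subgroup. -/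
def quotMulDistribMulAction (N : Subgroup G) [N.Normal]
    (hN : ∀ (a : A), ∀ x ∈ N, a • x ∈ N) :
    MulDistribMulAction A (G ⧸ N) where
  smul a := QuotientGroup.map N N (MulDistribMulAction.toMonoidHom G a)
    (fun x hx => by simpa using hN a x hx)
  one_smul q := by
    refine QuotientGroup.induction_on q fun g => ?_
    show QuotientGroup.map N N _ _ ((g : G ⧸ N)) = _
    rw [QuotientGroup.map_mk]
    simp
  mul_smul a b q := by
    refine QuotientGroup.induction_on q fun g => ?_
    show QuotientGroup.map N N _ _ ((g : G ⧸ N)) =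
      QuotientGroup.map N N _ _ (QuotientGroup.map N N _ _ ((g : G ⧸ N)))
    rw [QuotientGroup.map_mk, QuotientGroup.map_mk, QuotientGroup.map_mk]
    simp [mul_smul]
  smul_mul a q r := by
    refine QuotientGroup.induction_on q fun g => ?_
    refine QuotientGroup.induction_on r fun h => ?_
    show QuotientGroup.map N N _ _ ((g * h : G) : G ⧸ N) =
      QuotientGroup.map N N _ _ ((g : G ⧸ N)) * QuotientGroup.map N N _ _ ((h : G ⧸ N))
    rw [QuotientGroup.map_mk, QuotientGroup.map_mk, QuotientGroup.map_mk]
    simp [smul_mul']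
  smul_one a := by
    show QuotientGroup.map N N _ _ ((1 : G) : G ⧸ N) = _
    rw [QuotientGroup.map_mk]
    simp

lemma quotMulDistribMulAction_smul_mk (N : Subgroup G) [N.Normal]
    (hN : ∀ (a : A), ∀ x ∈ N, a • x ∈ N) (a : A) (g : G) :
    (quotMulDistribMulAction N hN).toMulAction.toSMul.smul a ((g : G ⧸ N)) = ((a • g : G) : G ⧸ N) := by
  show QuotientGroup.map N N _ _ ((g : G ⧸ N)) = _
  rw [QuotientGroup.map_mk]
  simp

/-- Telescoping: under a coprime action, a commutator fixed by `a` is trivial. -/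
lemma fixed_commutator_eq_one [Finite A] [Finite G]
    (hcop : (Nat.card A).Coprime (Nat.card G)) (g : G) (a : A)
    (hfix : a • (g⁻¹ * a • g) = g⁻¹ * a • g) : g⁻¹ * a • g = 1 := by
  set c : G := g⁻¹ * a • g with hc
  have hfixk : ∀ k : ℕ, a ^ k • c = c := by
    intro k
    induction k with
    | zero => simp
    | succ k ih => rw [pow_succ', mul_smul, ih]; exact hfix
  have key : ∀ k : ℕ, g⁻¹ * (a ^ k • g) = c ^ k := by
    intro k
    induction k with
    | zero => simp
    | succ k ih =>
        have h1 : (a ^ (k + 1)) • g = a ^ k • (a • g) := by rw [pow_succ, mul_smul]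
        have h2 : g⁻¹ * (a ^ (k+1) • g)
            = (g⁻¹ * (a ^ k • g)) * ((a ^ k • g)⁻¹ * (a ^ k • (a • g))) := by
          rw [h1]; group
        rw [h2, ih]
        have h3 : (a ^ k • g)⁻¹ * (a ^ k • (a • g)) = a ^ k • c := by
          rw [hc, smul_mul', smul_inv']
        rw [h3, hfixk, pow_succ]
  have hA : a ^ Nat.card A = 1 := by
    have := orderOf_dvd_natCard a
    exact orderOf_dvd_iff_pow_eq_one.mp this
  have hcA : c ^ Nat.card A = 1 := by
    rw [← key, hA, one_smul, inv_mul_cancel]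
  have h1 : orderOf c ∣ Nat.card A := orderOf_dvd_iff_pow_eq_one.mpr hcA
  have h2 : orderOf c ∣ Nat.card G := orderOf_dvd_natCard c
  have : orderOf c = 1 := Nat.eq_one_of_dvd_coprimes hcop h1 h2
  exact orderOf_eq_one_iff.mp this

end Chunk2
section Chunk3

open Subgroup

variable {G : Type*} [Group G] {p : ℕ}

lemma ppow_or_coprime_of_dvd (hp : p.Prime) {m n : ℕ} (h : m ∣ n)
    (hn : (∃ k, n = p ^ k) ∨ n.Coprime p) : (∃ k, m = p ^ k) ∨ m.Coprime p := by
  rcases hn with ⟨k, rfl⟩ | hn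
  · obtain ⟨j, -, rfl⟩ := (Nat.dvd_prime_pow hp).mp h
    exact Or.inl ⟨j, rfl⟩
  · exact Or.inr (Nat.Coprime.coprime_dvd_left h hn)

lemma isPSolvable_subgroup (hp : p.Prime) (H : Subgroup G) (h : IsPSolvable p G) :
    IsPSolvable p ↥H := by
  obtain ⟨n, c, h0, hl, hstep⟩ := h
  refine ⟨n, fun i => (c i).subgroupOf H, by show (c 0).subgroupOf H = ⊥; rw [h0, Subgroup.bot_subgroupOf],
    by show (c (Fin.last n)).subgroupOf H = ⊤; rw [hl, Subgroup.top_subgroupOf], fun i => ?_⟩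
  obtain ⟨hle, hnorm, hrel⟩ := hstep i
  have hconj := conj_mem_of_subgroupOf_normal hnorm hle
  refine ⟨fun x hx => hle hx, ?_, ?_⟩
  · refine normal_subgroupOf_of_conj ?_
    rintro g hg x hx
    have : ((g * x * g⁻¹ : ↥H) : G) = (g : G) * (x : G) * (g : G)⁻¹ := rfl
    show ((g * x * g⁻¹ : ↥H) : G) ∈ c i.castSucc
    rw [this]
    exact hconj (g : G) hg (x : G) hx
  · refine ppow_or_coprime_of_dvd hp ?_ hrel
    have e1 : ((c i.castSucc).subgroupOf H).relIndex ((c i.succ).subgroupOf H)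
        = (c i.castSucc).relIndex (c i.succ ⊓ H) := by
      rw [Subgroup.subgroupOf, Subgroup.relIndex_comap, Subgroup.subgroupOf_map_subtype]
    have e2 : (c i.castSucc).relIndex (c i.succ ⊓ H)
        = ((c i.castSucc).subgroupOf (c i.succ)).relIndex ((c i.succ ⊓ H).subgroupOf (c i.succ)) :=
      (Subgroup.relIndex_subgroupOf inf_le_left).symm
    rw [e1, e2]
    haveI := hnorm
    exact Subgroup.relIndex_dvd_index_of_normal ((c i.castSucc).subgroupOf (c i.succ))
      ((c i.succ ⊓ H).subgroupOf (c i.succ))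

lemma isPSolvable_quotient (hp : p.Prime) (T : Subgroup G) [T.Normal]
    (h : IsPSolvable p G) : IsPSolvable p (G ⧸ T) := by
  obtain ⟨n, c, h0, hl, hstep⟩ := h
  set π := QuotientGroup.mk' T with hπ
  have hsurj : Function.Surjective π := QuotientGroup.mk'_surjective T
  refine ⟨n, fun i => (c i).map π, by show (c 0).map π = ⊥; rw [h0, Subgroup.map_bot], ?_, fun i => ?_⟩
  · show (c (Fin.last n)).map π = ⊤
    rw [hl, ← MonoidHom.range_eq_map, MonoidHom.range_eq_top]
    exact hsurj
  obtain ⟨hle, hnorm, hrel⟩ := hstep i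
  have hconj := conj_mem_of_subgroupOf_normal hnorm hle
  refine ⟨Subgroup.map_mono hle, ?_, ?_⟩
  · refine normal_subgroupOf_of_conj ?_
    rintro g hg x hx
    obtain ⟨y, hy, rfl⟩ := hg
    obtain ⟨z, hz, rfl⟩ := hx
    refine ⟨y * z * y⁻¹, hconj y hy z hz, by simp⟩
  · refine ppow_or_coprime_of_dvd hp ?_ hrel
    have e1 : ((c i.castSucc).map π).relIndex ((c i.succ).map π)
        = ((c i.castSucc) ⊔ T).relIndex (c i.succ) := by
      rw [← Subgroup.relIndex_comap, Subgroup.comap_map_eq, QuotientGroup.ker_mk']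
    rw [e1]
    exact Subgroup.relIndex_dvd_of_le_left _ le_sup_left

end Chunk3
section Chunk4

open Subgroup

variable {G : Type*} [Group G] {p : ℕ}

private def conjEquivOf {K : Subgroup G} (g : G)
    (h : ∀ x ∈ K, g * x * g⁻¹ ∈ K) (h' : ∀ x ∈ K, g⁻¹ * x * g ∈ K) : ↥K ≃* ↥K where
  toFun z := ⟨g * z * g⁻¹, h z z.2⟩
  invFun z := ⟨g⁻¹ * z * g, h' z z.2⟩
  left_inv z := Subtype.ext (by simp only []; group)
  right_inv z := Subtype.ext (by simp only []; group)
  map_mul' z w := Subtype.ext (by simp only [Subgroup.coe_mul]; group)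

lemma climb_pCore [Finite G] {n : ℕ} (c : Fin (n + 1) → Subgroup G)
    (hl : c (Fin.last n) = ⊤)
    (hsteps : ∀ i : Fin n,
      c i.castSucc ≤ c i.succ ∧ ((c i.castSucc).subgroupOf (c i.succ)).Normal) :
    ∀ (m k : ℕ), k + m = n → ∀ (D : Subgroup G), D ≠ ⊥ → IsPGroup p ↥D →
      (∀ hk : k < n + 1, D ≤ c ⟨k, hk⟩) →
      (∀ (hk : k < n + 1), ∀ g ∈ c ⟨k, hk⟩, ∀ x ∈ D, g * x * g⁻¹ ∈ D) →
      pCore p G ≠ ⊥ := by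
  intro m
  induction m with
  | zero =>
      intro k hmk D hD hP hle hconj
      have hkn : k < n + 1 := by omega
      have hk : (⟨k, hkn⟩ : Fin (n+1)) = Fin.last n := by
        apply Fin.ext; simp [Fin.last]; omega
      have hDn : D.Normal := by
        constructor
        intro x hx g
        have := hconj hkn g (by rw [hk, hl]; trivial) x hx
        exact this
      intro hbot
      exact hD (le_bot_iff.mp (hbot ▸ le_pCore hDn hP))
  | succ m ih =>
      intro k hmk D hD hP hle hconj
      have hkn : k < n := by omega
      set i : Fin n := ⟨k, hkn⟩ with hi
      obtain ⟨hKle, hKnorm⟩ := hsteps i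
      have hconjK1 := conj_mem_of_subgroupOf_normal hKnorm hKle
      set K := c i.castSucc with hK
      set K1 := c i.succ with hK1
      have hleK : D ≤ K := hle (by omega)
      have hconjK : ∀ g ∈ K, ∀ x ∈ D, g * x * g⁻¹ ∈ D := hconj (by omega)
      set E := (pCore p ↥K).map K.subtype with hE
      have hDE : D ≤ E := by
        intro x hx
        refine ⟨⟨x, hleK hx⟩, ?_, rfl⟩
        have hnormD : (D.subgroupOf K).Normal :=
          normal_subgroupOf_of_conj (fun g hg y hy => hconjK g hg y hy)
        have hPD : IsPGroup p ↥(D.subgroupOf K) := hP.comap_subtype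
        exact le_pCore hnormD hPD (show (⟨x, hleK hx⟩ : ↥K) ∈ D.subgroupOf K from hx)
      have hEne : E ≠ ⊥ := by
        intro hEb
        exact hD (le_bot_iff.mp (hEb ▸ hDE))
      have hEp : IsPGroup p ↥E := pCore_isPGroup.map K.subtype
      have hEle : ∀ hk : k + 1 < n + 1, E ≤ c ⟨k + 1, hk⟩ := by
        intro _
        have : E ≤ K := Subgroup.map_subtype_le _
        exact le_trans this hKle
      have hEconj : ∀ (hk : k + 1 < n + 1), ∀ g ∈ c ⟨k + 1, hk⟩, ∀ x ∈ E, g * x * g⁻¹ ∈ E := by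
        intro _ g hg x hx
        obtain ⟨y, hy, rfl⟩ := hx
        have hgK1 : g ∈ K1 := hg
        have hconjfwd : ∀ z ∈ K, g * z * g⁻¹ ∈ K := fun z hz => hconjK1 g hgK1 z hz
        have hconjbwd : ∀ z ∈ K, g⁻¹ * z * g ∈ K := fun z hz => by
          simpa using hconjK1 g⁻¹ (inv_mem hgK1) z hz
        have := pCore_map_equiv (p := p) (conjEquivOf g hconjfwd hconjbwd) hy
        exact ⟨_, this, rfl⟩
      exact ih (k + 1) (by omega) E hEne hEp hEle hEconj

lemma climb_pPrimeCore [Finite G] {n : ℕ} (c : Fin (n + 1) → Subgroup G)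
    (hl : c (Fin.last n) = ⊤)
    (hsteps : ∀ i : Fin n,
      c i.castSucc ≤ c i.succ ∧ ((c i.castSucc).subgroupOf (c i.succ)).Normal) :
    ∀ (m k : ℕ), k + m = n → ∀ (D : Subgroup G), D ≠ ⊥ → (Nat.card ↥D).Coprime p →
      (∀ hk : k < n + 1, D ≤ c ⟨k, hk⟩) →
      (∀ (hk : k < n + 1), ∀ g ∈ c ⟨k, hk⟩, ∀ x ∈ D, g * x * g⁻¹ ∈ D) →
      pPrimeCore p G ≠ ⊥ := by
  intro m
  induction m with
  | zero =>
      intro k hmk D hD hP hle hconj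
      have hkn : k < n + 1 := by omega
      have hk : (⟨k, hkn⟩ : Fin (n+1)) = Fin.last n := by
        apply Fin.ext; simp [Fin.last]; omega
      have hDn : D.Normal := by
        constructor
        intro x hx g
        exact hconj hkn g (by rw [hk, hl]; trivial) x hx
      intro hbot
      exact hD (le_bot_iff.mp (hbot ▸ le_pPrimeCore hDn hP))
  | succ m ih =>
      intro k hmk D hD hP hle hconj
      have hkn : k < n := by omega
      set i : Fin n := ⟨k, hkn⟩ with hi
      obtain ⟨hKle, hKnorm⟩ := hsteps i
      have hconjK1 := conj_mem_of_subgroupOf_normal hKnorm hKle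
      set K := c i.castSucc with hK
      set K1 := c i.succ with hK1
      have hleK : D ≤ K := hle (by omega)
      have hconjK : ∀ g ∈ K, ∀ x ∈ D, g * x * g⁻¹ ∈ D := hconj (by omega)
      set E := (pPrimeCore p ↥K).map K.subtype with hE
      have hDE : D ≤ E := by
        intro x hx
        refine ⟨⟨x, hleK hx⟩, ?_, rfl⟩
        have hnormD : (D.subgroupOf K).Normal :=
          normal_subgroupOf_of_conj (fun g hg y hy => hconjK g hg y hy)
        have hcD : (Nat.card ↥(D.subgroupOf K)).Coprime p := by
          rwa [Nat.card_congr (Subgroup.subgroupOfEquivOfLe hleK).toEquiv]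
        exact le_pPrimeCore hnormD hcD (show (⟨x, hleK hx⟩ : ↥K) ∈ D.subgroupOf K from hx)
      have hEne : E ≠ ⊥ := by
        intro hEb
        exact hD (le_bot_iff.mp (hEb ▸ hDE))
      have hEp : (Nat.card ↥E).Coprime p := by
        rw [← Nat.card_congr ((pPrimeCore p ↥K).equivMapOfInjective K.subtype
          Subtype.coe_injective).toEquiv]
        exact pPrimeCore_card_coprime
      have hEle : ∀ hk : k + 1 < n + 1, E ≤ c ⟨k + 1, hk⟩ := by
        intro _
        exact le_trans (Subgroup.map_subtype_le _) hKle
      have hEconj : ∀ (hk : k + 1 < n + 1), ∀ g ∈ c ⟨k + 1, hk⟩, ∀ x ∈ E, g * x * g⁻¹ ∈ E := by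
        intro _ g hg x hx
        obtain ⟨y, hy, rfl⟩ := hx
        have hgK1 : g ∈ K1 := hg
        have hconjfwd : ∀ z ∈ K, g * z * g⁻¹ ∈ K := fun z hz => hconjK1 g hgK1 z hz
        have hconjbwd : ∀ z ∈ K, g⁻¹ * z * g ∈ K := fun z hz => by
          simpa using hconjK1 g⁻¹ (inv_mem hgK1) z hz
        have := pPrimeCore_map_equiv (p := p) (conjEquivOf g hconjfwd hconjbwd) hy
        exact ⟨_, this, rfl⟩
      exact ih (k + 1) (by omega) E hEne hEp hEle hEconj

lemma pCore_or_pPrimeCore_ne_bot [Finite G] (hp : p.Prime) (hG : Nat.card G ≠ 1)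
    (h : IsPSolvable p G) : pCore p G ≠ ⊥ ∨ pPrimeCore p G ≠ ⊥ := by
  haveI : Fact p.Prime := ⟨hp⟩
  obtain ⟨n, c, h0, hl, hstep⟩ := h
  have hnontriv : (⊥ : Subgroup G) ≠ ⊤ := by
    intro e
    apply hG
    rw [← Subgroup.card_top (G := G), ← e, Subgroup.card_bot]
  by_cases hall : ∀ i : Fin n, c i.castSucc = ⊥ → c i.succ = ⊥
  · exfalso
    have hbotall : ∀ j : Fin (n+1), c j = ⊥ := by
      intro j
      induction j using Fin.induction with
      | zero => exact h0
      | succ i ihi => exact hall i ihi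
    exact hnontriv ((hbotall (Fin.last n)).symm.trans hl)
  · push_neg at hall
    obtain ⟨i, hib, his⟩ := hall
    have hrel := (hstep i).2.2
    rw [hib, Subgroup.relIndex_bot_left] at hrel
    have hle : ∀ hk : (i : ℕ) + 1 < n + 1, c i.succ ≤ c ⟨(i : ℕ) + 1, hk⟩ := by
      intro hk
      have : (⟨(i : ℕ) + 1, hk⟩ : Fin (n+1)) = i.succ := rfl
      rw [this]
    have hconj : ∀ (hk : (i : ℕ) + 1 < n + 1), ∀ g ∈ c ⟨(i : ℕ) + 1, hk⟩,
        ∀ x ∈ c i.succ, g * x * g⁻¹ ∈ c i.succ := by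
      intro hk g hg x hx
      have hg' : g ∈ c i.succ := hg
      exact mul_mem (mul_mem hg' hx) (inv_mem hg')
    rcases hrel with ⟨k, hpk⟩ | hcop
    · left
      exact climb_pCore c hl (fun j => ⟨(hstep j).1, (hstep j).2.1⟩)
        (n - ((i : ℕ) + 1)) ((i : ℕ) + 1) (by omega) (c i.succ) his
        (IsPGroup.of_card hpk) hle hconj
    · right
      exact climb_pPrimeCore c hl (fun j => ⟨(hstep j).1, (hstep j).2.1⟩)
        (n - ((i : ℕ) + 1)) ((i : ℕ) + 1) (by omega) (c i.succ) his hcop hle hconj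

end Chunk4
section Chunk5

open Subgroup

variable {G : Type*} [Group G] {p : ℕ}

lemma centralizer_normal_of_normal {Q : Subgroup G} (hQn : Q.Normal) :
    (Subgroup.centralizer (Q : Set G)).Normal := by
  constructor
  intro n hn g
  rw [Subgroup.mem_centralizer_iff] at hn ⊢
  intro x hx
  have hx' : g⁻¹ * x * g ∈ Q := by simpa using hQn.conj_mem x hx g⁻¹
  have h1 := hn (g⁻¹ * x * g) hx'
  have h2 : x * (g * n * g⁻¹) = g * ((g⁻¹ * x * g) * n) * g⁻¹ := by group
  rw [h2, h1]; group

/-- If `O_{p'}(G) = ⊥` and `Q` is a normal `p`-subgroup with index coprime to `p`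
(i.e. a normal Sylow `p`-subgroup), then the centralizer of `Q` is contained in `Q`. -/
lemma centralizer_le_of_normal_sylow [Finite G] (hp : p.Prime)
    (hbot : pPrimeCore p G = ⊥) {Q : Subgroup G} (hQn : Q.Normal)
    (hQ : IsPGroup p ↥Q) (hind : Q.index.Coprime p) :
    Subgroup.centralizer (Q : Set G) ≤ Q := by
  haveI : Fact p.Prime := ⟨hp⟩
  set C := Subgroup.centralizer (Q : Set G) with hC
  have hCn : C.Normal := centralizer_normal_of_normal hQn
  set D := Q.subgroupOf C with hD
  haveI hDn : D.Normal := normal_subgroupOf_of_conj (fun g _ x hx => hQn.conj_mem x hx g)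
  have hDp : IsPGroup p ↥D := hQ.comap_subtype
  obtain ⟨b, hb⟩ := IsPGroup.iff_card.mp hDp
  -- index of D in C divides Q.index
  set φ : ↥C →* G ⧸ Q := (QuotientGroup.mk' Q).comp C.subtype with hφ
  have hker : φ.ker = D := by
    ext x
    simp only [hφ, MonoidHom.mem_ker, MonoidHom.comp_apply, QuotientGroup.mk'_apply,
      QuotientGroup.eq_one_iff, hD, Subgroup.mem_subgroupOf]
    rfl
  have hindD : D.index ∣ Q.index := by
    have e1 : D.index = Nat.card (↥C ⧸ D) := rfl
    rw [e1, ← hker, Nat.card_congr (QuotientGroup.quotientKerEquivRange φ).toEquiv]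
    exact Subgroup.card_subgroup_dvd_card φ.range
  have hcop : (Nat.card ↥D).Coprime D.index := by
    rw [hb]
    exact Nat.Coprime.pow_left b ((hind.symm).coprime_dvd_right hindD)
  obtain ⟨Kc, hKc⟩ := Subgroup.exists_right_complement'_of_coprime hcop
  -- card Kc = D.index
  have hcardC : Nat.card ↥C = Nat.card (↥C ⧸ D) * Nat.card ↥D :=
    Subgroup.card_eq_card_quotient_mul_card_subgroup D
  have hKcMul : Nat.card ↥D * Nat.card ↥Kc = Nat.card ↥C := hKc.card_mul
  have hDpos : 0 < Nat.card ↥D := Nat.card_pos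
  have hcardKc : Nat.card ↥Kc = D.index := by
    have : Nat.card ↥D * Nat.card ↥Kc = Nat.card ↥D * D.index := by
      rw [hKcMul, hcardC]
      show Nat.card (↥C ⧸ D) * Nat.card ↥D = Nat.card ↥D * D.index
      rw [Nat.mul_comm]
      rfl
    exact Nat.eq_of_mul_eq_mul_left hDpos this
  have hKccop : (Nat.card ↥Kc).Coprime p := by
    rw [hcardKc]
    exact hind.coprime_dvd_left hindD
  -- D is central in C
  have hcent : ∀ d : ↥C, d ∈ D → ∀ c : ↥C, c * d = d * c := by
    intro d hd c
    have hdQ : (d : G) ∈ Q := hd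
    have := c.2
    rw [Subgroup.mem_centralizer_iff] at this
    exact Subtype.ext (by simpa using (this (d : G) hdQ).symm)
  -- elements of coprime order lie in Kc
  have claim2 : ∀ x : ↥C, (orderOf x).Coprime p → x ∈ Kc := by
    intro x hx
    obtain ⟨⟨d, k⟩, hdk, -⟩ := hKc.existsUnique x
    simp only at hdk
    have hcomm : Commute ((d : ↥C)) ((k : ↥C)) := (hcent d d.2 k).symm
    have hpow : ((d : ↥C)) ^ orderOf x * ((k : ↥C)) ^ orderOf x = 1 := by
      rw [← Commute.mul_pow hcomm, hdk, pow_orderOf_eq_one]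
    have hdm : ((d : ↥C)) ^ orderOf x ∈ D := pow_mem d.2 _
    have hkm : ((k : ↥C)) ^ orderOf x ∈ Kc := pow_mem k.2 _
    have hdinv : ((d : ↥C)) ^ orderOf x = (((k : ↥C)) ^ orderOf x)⁻¹ :=
      eq_inv_of_mul_eq_one_left hpow
    have hdbot : ((d : ↥C)) ^ orderOf x = 1 := by
      have hmem : ((d : ↥C)) ^ orderOf x ∈ D ⊓ Kc := ⟨hdm, by rw [hdinv]; exact Kc.inv_mem hkm⟩
      have := hKc.disjoint.le_bot hmem
      simpa using this
    have hod : orderOf ((d : ↥C)) ∣ orderOf x := orderOf_dvd_of_pow_eq_one hdbot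
    have hod2 : orderOf ((d : ↥C)) ∣ p ^ b := by
      have : orderOf ((d : ↥C)) = orderOf d := (orderOf_injective D.subtype Subtype.coe_injective d)
      rw [this, ← hb]
      exact orderOf_dvd_natCard d
    have hd1 : orderOf ((d : ↥C)) = 1 := by
      refine Nat.eq_one_of_dvd_coprimes (Nat.Coprime.pow_right b hx) hod hod2
    have : (d : ↥C) = 1 := orderOf_eq_one_iff.mp hd1
    rw [← hdk, this, one_mul]
    exact k.2
  have claim1 : ∀ x : ↥C, x ∈ Kc → (orderOf x).Coprime p := by
    intro x hx
    have : orderOf x = orderOf (⟨x, hx⟩ : ↥Kc) :=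
      (orderOf_injective Kc.subtype Subtype.coe_injective ⟨x, hx⟩).symm.symm
    rw [this]
    exact hKccop.coprime_dvd_left (orderOf_dvd_natCard _)
  -- the image of Kc in G is a normal p'-subgroup
  set Km := Kc.map C.subtype with hKm
  have hKmn : Km.Normal := by
    constructor
    rintro x ⟨k, hk, rfl⟩ g
    have hgC : g * (k : G) * g⁻¹ ∈ C := hCn.conj_mem (k : G) k.2 g
    refine ⟨⟨g * (k : G) * g⁻¹, hgC⟩, ?_, rfl⟩
    refine claim2 _ ?_
    have e1 : orderOf (⟨g * (k : G) * g⁻¹, hgC⟩ : ↥C) = orderOf (g * (k : G) * g⁻¹ : G) :=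
      (orderOf_injective C.subtype Subtype.coe_injective ⟨g * (k : G) * g⁻¹, hgC⟩).symm
    have e2 : orderOf (g * (k : G) * g⁻¹ : G) = orderOf ((k : G)) := by
      have : g * (k : G) * g⁻¹ = (MulAut.conj g) ((k : G)) := by simp [MulAut.conj]
      rw [this]
      exact orderOf_injective (MulAut.conj g).toMonoidHom (MulAut.conj g).injective _
    have e3 : orderOf ((k : G)) = orderOf k :=
      orderOf_injective C.subtype Subtype.coe_injective k
    rw [e1, e2, e3]
    exact claim1 k hk
  have hKmcop : (Nat.card ↥Km).Coprime p := by
    rw [hKm, ← Nat.card_congr (Kc.equivMapOfInjective C.subtype Subtype.coe_injective).toEquiv]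
    exact hKccop
  have hKmbot : Km = ⊥ := by
    have := le_pPrimeCore hKmn hKmcop
    rw [hbot] at this
    exact le_bot_iff.mp this
  -- conclude : Kc is trivial hence D = ⊤ in C
  have hKcbot : Kc = ⊥ := by
    ext k
    simp only [Subgroup.mem_bot]
    constructor
    · intro hk
      have : (k : G) ∈ Km := ⟨k, hk, rfl⟩
      rw [hKmbot, Subgroup.mem_bot] at this
      exact Subtype.ext this
    · rintro rfl; exact one_mem _
  have hDtop : D = ⊤ := by
    have : D.index = 1 := by rw [← hcardKc, hKcbot, Subgroup.card_bot]
    exact Subgroup.index_eq_one.mp this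
  intro x hx
  have : (⟨x, hx⟩ : ↥C) ∈ D := hDtop ▸ Subgroup.mem_top _
  exact this

end Chunk5
section Chunk6

open Subgroup

variable {G : Type*} [Group G] {p : ℕ}

lemma index_subgroupOf_comap_dvd [Finite G] {T : Subgroup G} [T.Normal]
    (S : Subgroup (G ⧸ T)) :
    (T.subgroupOf (S.comap (QuotientGroup.mk' T))).index ∣ Nat.card ↥S := by
  set π := QuotientGroup.mk' T with hπ
  set M := S.comap π with hM
  have hTM : T ≤ M := by
    intro x hx
    show π x ∈ S
    have : π x = 1 := (QuotientGroup.eq_one_iff x).mpr hx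
    rw [this]; exact one_mem S
  set ψ : ↥M →* ↥S := (π.domRestrict M).codRestrict S (fun x => x.2) with hψ
  have hker : ψ.ker = T.subgroupOf M := by
    ext x
    simp only [MonoidHom.mem_ker, hψ, Subgroup.mem_subgroupOf]
    constructor
    · intro h
      have : π (x : G) = 1 := congrArg Subtype.val h
      exact (QuotientGroup.eq_one_iff _).mp this
    · intro h
      apply Subtype.ext
      exact (QuotientGroup.eq_one_iff _).mpr h
  have e1 : (T.subgroupOf M).index = Nat.card (↥M ⧸ ψ.ker) := by rw [hker]; rfl
  rw [e1, Nat.card_congr (QuotientGroup.quotientKerEquivRange ψ).toEquiv]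
  exact Subgroup.card_subgroup_dvd_card ψ.range

lemma card_comap_coprime [Finite G] {T : Subgroup G} [T.Normal] (S : Subgroup (G ⧸ T))
    (hT : (Nat.card ↥T).Coprime p) (hS : (Nat.card ↥S).Coprime p) :
    (Nat.card ↥(S.comap (QuotientGroup.mk' T))).Coprime p := by
  set π := QuotientGroup.mk' T with hπ
  set M := S.comap π with hM
  have hTM : T ≤ M := by
    intro x hx
    show π x ∈ S
    have : π x = 1 := (QuotientGroup.eq_one_iff x).mpr hx
    rw [this]; exact one_mem S
  haveI hT'n : (T.subgroupOf M).Normal :=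
    normal_subgroupOf_of_conj (fun g _ x hx => ‹T.Normal›.conj_mem x hx g)
  have hcardM : Nat.card ↥M = Nat.card (↥M ⧸ T.subgroupOf M) * Nat.card ↥(T.subgroupOf M) :=
    Subgroup.card_eq_card_quotient_mul_card_subgroup _
  have e2 : Nat.card ↥(T.subgroupOf M) = Nat.card ↥T :=
    Nat.card_congr (Subgroup.subgroupOfEquivOfLe hTM).toEquiv
  have hq : Nat.card (↥M ⧸ T.subgroupOf M) ∣ Nat.card ↥S := index_subgroupOf_comap_dvd S
  rw [hcardM, e2]
  exact Nat.Coprime.mul ((hS.coprime_dvd_left hq)) hT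

end Chunk6
section Chunk7

open Subgroup

universe u v

lemma quotient_setup {A : Type u} [Group A] [Finite A] {G : Type v} [Group G] [Finite G]
    [MulDistribMulAction A G] {p : ℕ} (hp : p.Prime)
    (hcop : (Nat.card A).Coprime (Nat.card G)) (hpsol : IsPSolvable p G)
    (P : Sylow p G) (hPcent : ∀ (a : A), ∀ x ∈ (P : Subgroup G), a • x = x)
    (T : Subgroup G) [T.Normal] (hinv : ∀ (a : A), ∀ x ∈ T, a • x ∈ T) :
    (Nat.card A).Coprime (Nat.card (G ⧸ T)) ∧ IsPSolvable p (G ⧸ T) ∧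
      (∃ P' : Sylow p (G ⧸ T), ∀ (a : A), ∀ x ∈ (P' : Subgroup (G ⧸ T)),
        (quotMulDistribMulAction T hinv).toMulAction.toSMul.smul a x = x) := by
  haveI : Fact p.Prime := ⟨hp⟩
  have hsurj := QuotientGroup.mk'_surjective T
  refine ⟨?_, isPSolvable_quotient hp T hpsol, ?_⟩
  · have hdvd : Nat.card (G ⧸ T) ∣ Nat.card G :=
      ⟨Nat.card ↥T, Subgroup.card_eq_card_quotient_mul_card_subgroup T⟩
    exact hcop.coprime_dvd_right hdvd
  · refine ⟨Sylow.mapSurjective hsurj P, ?_⟩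
    intro a x hx
    rw [Sylow.coe_mapSurjective] at hx
    obtain ⟨y, hy, rfl⟩ := hx
    show (quotMulDistribMulAction T hinv).toMulAction.toSMul.smul a ((y : G ⧸ T)) = _
    rw [quotMulDistribMulAction_smul_mk T hinv a y, hPcent a y hy]
    rfl

lemma main_aux {A : Type u} [Group A] [Finite A] :
    ∀ (n : ℕ) (G : Type v) [Group G] [Finite G] [MulDistribMulAction A G],
      Nat.card G ≤ n → ∀ (p : ℕ), p.Prime →
      (Nat.card A).Coprime (Nat.card G) →
      IsPSolvable p G →
      (∃ P : Sylow p G, ∀ (a : A), ∀ x ∈ (P : Subgroup G), a • x = x) →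
      ∀ (g : G) (a : A), g⁻¹ * a • g ∈ pPrimeCore p G := by
  intro n
  induction n with
  | zero =>
      intro G _ _ _ hcard
      exact absurd (Nat.le_zero.mp hcard) Nat.card_pos.ne'
  | succ n ih =>
      intro G _ _ _ hcard p hp hcop hpsol hcent
      haveI : Fact p.Prime := ⟨hp⟩
      obtain ⟨P, hPcent⟩ := hcent
      by_cases hN : pPrimeCore p G = ⊥
      · -- `O_{p'}(G) = ⊥` : main case
        have hQP : pCore p G ≤ (P : Subgroup G) := pCore_le_sylow P
        have hQcent : ∀ (a : A), ∀ x ∈ pCore p G, a • x = x := fun a x hx =>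
          hPcent a x (hQP hx)
        have hCmem : ∀ (g : G) (a : A),
            g⁻¹ * a • g ∈ Subgroup.centralizer ((pCore p G : Subgroup G) : Set G) := by
          intro g a
          rw [Subgroup.mem_centralizer_iff]
          intro x hx
          have hxg : g * x * g⁻¹ ∈ pCore p G := pCore_normal.conj_mem x hx g
          have key : (a • g) * x * (a • g)⁻¹ = g * x * g⁻¹ := by
            calc (a • g) * x * (a • g)⁻¹ = (a • g) * (a • x) * (a • g⁻¹) := by
                  rw [hQcent a x hx, smul_inv']
              _ = a • (g * x * g⁻¹) := by rw [smul_mul', smul_mul']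
              _ = g * x * g⁻¹ := hQcent a _ hxg
          calc x * (g⁻¹ * a • g) = g⁻¹ * (g * x * g⁻¹) * (a • g) := by group
            _ = g⁻¹ * ((a • g) * x * (a • g)⁻¹) * (a • g) := by rw [key]
            _ = (g⁻¹ * a • g) * x := by group
        by_cases hQi : ((pCore p G).index).Coprime p
        · -- normal Sylow case : direct argument
          intro g a
          have hc : g⁻¹ * a • g ∈ pCore p G :=
            centralizer_le_of_normal_sylow hp hN pCore_normal pCore_isPGroup hQi (hCmem g a)
          have hfix : a • (g⁻¹ * a • g) = g⁻¹ * a • g := hQcent a _ hc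
          rw [fixed_commutator_eq_one hcop g a hfix]
          exact one_mem _
        · -- `p` divides the index of `O_p(G)`
          have hG1 : Nat.card G ≠ 1 := by
            intro h1
            apply hQi
            have hdvd : (pCore p G).index ∣ Nat.card G := Subgroup.index_dvd_card _
            rw [h1] at hdvd
            rw [Nat.dvd_one.mp hdvd]
            exact Nat.coprime_one_left p
          have hQne : pCore p G ≠ ⊥ := by
            rcases pCore_or_pPrimeCore_ne_bot hp hG1 hpsol with h | h
            · exact h
            · exact absurd hN h
          have hinv : ∀ (a : A), ∀ x ∈ pCore p G, a • x ∈ pCore p G := fun a x hx =>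
            pCore_map_equiv (MulDistribMulAction.toMulAut A G a) hx
          letI actQ : MulDistribMulAction A (G ⧸ pCore p G) :=
            quotMulDistribMulAction (pCore p G) hinv
          have hsmul : ∀ (a : A) (g : G),
              a • ((g : G ⧸ pCore p G)) = ((a • g : G) : G ⧸ pCore p G) :=
            fun a g => quotMulDistribMulAction_smul_mk (pCore p G) hinv a g
          obtain ⟨hcop', hpsol', hcent'⟩ := quotient_setup hp hcop hpsol P hPcent (pCore p G) hinv
          have hcardlt : Nat.card (G ⧸ pCore p G) ≤ n := by
            have hmul : Nat.card (G ⧸ pCore p G) * Nat.card ↥(pCore p G) = Nat.card G :=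
              (Subgroup.card_eq_card_quotient_mul_card_subgroup (pCore p G)).symm
            have h2 : 1 < Nat.card ↥(pCore p G) := (Subgroup.one_lt_card_iff_ne_bot (pCore p G)).mpr hQne
            have hqpos : 0 < Nat.card (G ⧸ pCore p G) := Nat.card_pos
            nlinarith
          have ihq := ih (G ⧸ pCore p G) hcardlt p hp hcop' hpsol' hcent'
          have hMn : ((pPrimeCore p (G ⧸ pCore p G)).comap
              (QuotientGroup.mk' (pCore p G))).Normal :=
            Subgroup.Normal.comap inferInstance _
          set M : Subgroup G :=
            (pPrimeCore p (G ⧸ pCore p G)).comap (QuotientGroup.mk' (pCore p G)) with hMdef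
          have hMne : M ≠ ⊤ := by
            intro htop
            apply hQi
            have hRtop : pPrimeCore p (G ⧸ pCore p G) = ⊤ := by
              have h1 := (Subgroup.map_comap_eq_self_of_surjective
                (QuotientGroup.mk'_surjective (pCore p G))
                (pPrimeCore p (G ⧸ pCore p G))).symm
              rw [h1, ← hMdef, htop]
              rw [← MonoidHom.range_eq_map, MonoidHom.range_eq_top]
              exact QuotientGroup.mk'_surjective (pCore p G)
            have e : (pCore p G).index = Nat.card (G ⧸ pCore p G) := rfl
            rw [e, ← Subgroup.card_top, ← hRtop]
            exact pPrimeCore_card_coprime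
          have hMinv : ∀ (a : A), ∀ x ∈ M, a • x ∈ M := by
            intro a x hx
            show (QuotientGroup.mk' (pCore p G)) (a • x) ∈ pPrimeCore p (G ⧸ pCore p G)
            have e : ((a • x : G) : G ⧸ pCore p G) = a • ((x : G ⧸ pCore p G)) :=
              (hsmul a x).symm
            show ((a • x : G) : G ⧸ pCore p G) ∈ pPrimeCore p (G ⧸ pCore p G)
            rw [e]
            exact pPrimeCore_map_equiv (MulDistribMulAction.toMulAut A (G ⧸ pCore p G) a) hx
          letI actM : MulDistribMulAction A ↥M := subMulDistribMulAction M hMinv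
          have hcardM : Nat.card ↥M ≤ n := by
            have hdvd : Nat.card ↥M ∣ Nat.card G := Subgroup.card_subgroup_dvd_card M
            have hne : Nat.card ↥M ≠ Nat.card G := fun h => hMne (Subgroup.eq_top_of_card_eq M h)
            have := Nat.le_of_dvd Nat.card_pos hdvd
            omega
          have hcopM : (Nat.card A).Coprime (Nat.card ↥M) :=
            hcop.coprime_dvd_right (Subgroup.card_subgroup_dvd_card M)
          have hpsolM : IsPSolvable p ↥M := isPSolvable_subgroup hp M hpsol
          have hQM : pCore p G ≤ M := by
            intro x hx
            show (QuotientGroup.mk' (pCore p G)) x ∈ pPrimeCore p (G ⧸ pCore p G)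
            have : (QuotientGroup.mk' (pCore p G)) x = 1 := (QuotientGroup.eq_one_iff x).mpr hx
            rw [this]
            exact one_mem _
          have hSp : IsPGroup p ↥((pCore p G).subgroupOf M) := pCore_isPGroup.comap_subtype
          have hSind : ¬ p ∣ ((pCore p G).subgroupOf M).index := by
            intro hdvd
            have h1 : ((pCore p G).subgroupOf M).index ∣ Nat.card ↥(pPrimeCore p (G ⧸ pCore p G)) :=
              index_subgroupOf_comap_dvd _
            have h2 : (((pCore p G).subgroupOf M).index).Coprime p :=
              pPrimeCore_card_coprime.coprime_dvd_left h1
            have := Nat.eq_one_of_dvd_coprimes h2 hdvd dvd_rfl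
            exact hp.ne_one this
          have hcentM : ∃ PM : Sylow p ↥M, ∀ (a : A), ∀ x ∈ (PM : Subgroup ↥M), a • x = x := by
            refine ⟨hSp.toSylow hSind, ?_⟩
            intro a x hx
            rw [IsPGroup.toSylow_coe] at hx
            apply Subtype.ext
            show a • (x : G) = (x : G)
            exact hQcent a (x : G) hx
          have ihM := ih ↥M hcardM p hp hcopM hpsolM hcentM
          have hPMbot : pPrimeCore p ↥M = ⊥ := by
            have hPmn : ((pPrimeCore p ↥M).map M.subtype).Normal := by
              constructor
              rintro x ⟨y, hy, rfl⟩ g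
              have hfwd : ∀ z ∈ M, g * z * g⁻¹ ∈ M := fun z hz => hMn.conj_mem z hz g
              have hbwd : ∀ z ∈ M, g⁻¹ * z * g ∈ M := fun z hz => by
                simpa using hMn.conj_mem z hz g⁻¹
              have := pPrimeCore_map_equiv (p := p) (conjEquivOf g hfwd hbwd) hy
              exact ⟨_, this, rfl⟩
            have hPmc : (Nat.card ↥((pPrimeCore p ↥M).map M.subtype)).Coprime p := by
              rw [← Nat.card_congr ((pPrimeCore p ↥M).equivMapOfInjective M.subtype
                Subtype.coe_injective).toEquiv]
              exact pPrimeCore_card_coprime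
            have hle : (pPrimeCore p ↥M).map M.subtype ≤ pPrimeCore p G :=
              le_pPrimeCore hPmn hPmc
            rw [hN] at hle
            have hPmbot : (pPrimeCore p ↥M).map M.subtype = ⊥ := le_bot_iff.mp hle
            ext x
            simp only [Subgroup.mem_bot]
            constructor
            · intro hx
              have hxm : (x : G) ∈ (pPrimeCore p ↥M).map M.subtype := ⟨x, hx, rfl⟩
              rw [hPmbot, Subgroup.mem_bot] at hxm
              exact Subtype.ext hxm
            · rintro rfl; exact one_mem _
          have hMfix : ∀ z ∈ M, ∀ (a : A), a • z = z := by
            intro z hz a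
            have h0 := ihM ⟨z, hz⟩ a
            rw [hPMbot, Subgroup.mem_bot] at h0
            have h2 : a • (⟨z, hz⟩ : ↥M) = ⟨z, hz⟩ := (inv_mul_eq_one.mp h0).symm
            exact congrArg Subtype.val h2
          intro g a
          have hgen : ((g⁻¹ * a • g : G) : G ⧸ pCore p G) ∈ pPrimeCore p (G ⧸ pCore p G) := by
            have h0 := ihq ((g : G ⧸ pCore p G)) a
            have e : ((g : G ⧸ pCore p G))⁻¹ * a • ((g : G ⧸ pCore p G))
                = ((g⁻¹ * a • g : G) : G ⧸ pCore p G) := by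
              rw [hsmul a g]
              simp
            rwa [e] at h0
          have hcM : g⁻¹ * a • g ∈ M := hgen
          have hfix : a • (g⁻¹ * a • g) = g⁻¹ * a • g := hMfix _ hcM a
          rw [fixed_commutator_eq_one hcop g a hfix]
          exact one_mem _
      · -- `O_{p'}(G) ≠ ⊥` : quotient by it
        have hinv : ∀ (a : A), ∀ x ∈ pPrimeCore p G, a • x ∈ pPrimeCore p G := fun a x hx =>
          pPrimeCore_map_equiv (MulDistribMulAction.toMulAut A G a) hx
        letI actQ : MulDistribMulAction A (G ⧸ pPrimeCore p G) :=
          quotMulDistribMulAction (pPrimeCore p G) hinv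
        have hsmul : ∀ (a : A) (g : G),
            a • ((g : G ⧸ pPrimeCore p G)) = ((a • g : G) : G ⧸ pPrimeCore p G) :=
          fun a g => quotMulDistribMulAction_smul_mk (pPrimeCore p G) hinv a g
        obtain ⟨hcop', hpsol', hcent'⟩ := quotient_setup hp hcop hpsol P hPcent (pPrimeCore p G) hinv
        have hcardlt : Nat.card (G ⧸ pPrimeCore p G) ≤ n := by
          have hmul : Nat.card (G ⧸ pPrimeCore p G) * Nat.card ↥(pPrimeCore p G) = Nat.card G :=
            (Subgroup.card_eq_card_quotient_mul_card_subgroup (pPrimeCore p G)).symm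
          have h2 : 1 < Nat.card ↥(pPrimeCore p G) := (Subgroup.one_lt_card_iff_ne_bot (pPrimeCore p G)).mpr hN
          have hqpos : 0 < Nat.card (G ⧸ pPrimeCore p G) := Nat.card_pos
          nlinarith
        have ihq := ih (G ⧸ pPrimeCore p G) hcardlt p hp hcop' hpsol' hcent'
        intro g a
        have hgen : ((g⁻¹ * a • g : G) : G ⧸ pPrimeCore p G)
            ∈ pPrimeCore p (G ⧸ pPrimeCore p G) := by
          have h0 := ihq ((g : G ⧸ pPrimeCore p G)) a
          have e : ((g : G ⧸ pPrimeCore p G))⁻¹ * a • ((g : G ⧸ pPrimeCore p G))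
              = ((g⁻¹ * a • g : G) : G ⧸ pPrimeCore p G) := by
            rw [hsmul a g]
            simp
          rwa [e] at h0
        have hM : (pPrimeCore p (G ⧸ pPrimeCore p G)).comap
            (QuotientGroup.mk' (pPrimeCore p G)) ≤ pPrimeCore p G := by
          refine le_pPrimeCore (Subgroup.Normal.comap inferInstance _) ?_
          exact card_comap_coprime _ pPrimeCore_card_coprime pPrimeCore_card_coprime
        exact hM hgen

end Chunk7
/-- If a finite group `A` acts coprimely on a finite `p`-solvable group `G` and `A`
centralizes some Sylow `p`-subgroup of `G`, then `[G, A] ≤ O_{p'}(G)`. -/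
theorem actCommutator_le_pPrimeCore_of_centralizes_sylow
    {A G : Type*} [Group A] [Group G] [Finite A] [Finite G] [MulDistribMulAction A G]
    (p : ℕ) (hp : p.Prime)
    (hcop : (Nat.card A).Coprime (Nat.card G))
    (hsol : IsSolvable A ∨ IsSolvable G)
    (hpsol : IsPSolvable p G)
    (hcent : ∃ P : Sylow p G, ∀ (a : A), ∀ x ∈ (P : Subgroup G), a • x = x) :
    actCommutator A G ≤ pPrimeCore p G := by
  rw [actCommutator, Subgroup.closure_le]
  rintro x ⟨g, a, rfl⟩
  exact main_aux (Nat.card G) G le_rfl p hp hcop hpsol hcent g a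
end

section
/- Suppose a finite group A acts coprimely on a finite p-group G, where p is a prime, that A centralizes every characteristic abelian subgroup of G, and that G = [G, A]. Then G' = Φ(G) = Z(G) = C_G(A), where G' is the derived subgroup and Φ(G) the Frattini subgroup of G. -/
open scoped commutatorElement

namespace CoprimeSpecial

variable {A G : Type*} [Group A] [Group G] [MulDistribMulAction A G]

theorem mem_fixedSub_iff {a : A} {x : G} : x ∈ fixedSub G a ↔ a • x = x := Iff.rfl

theorem smul_mem_of_characteristic (U : Subgroup G) (hU : U.Characteristic)
    (a : A) {x : G} (hx : x ∈ U) : a • x ∈ U := by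
  have h := Subgroup.characteristic_iff_comap_eq.mp hU (MulDistribMulAction.toMulAut A G a)
  rw [← h] at hx
  exact hx

/-- Any normal subgroup centralized by `A` is central, provided `G = [G,A]`. -/
theorem le_center_of_fixed (hGA : actCommutator A G = ⊤)
    (M : Subgroup G) (hM : M.Normal)
    (hfix : ∀ (a : A) (m : G), m ∈ M → a • m = m) : M ≤ Subgroup.center G := by
  intro m hm
  rw [Subgroup.mem_center_iff]
  intro g
  have key : ∀ x : G, x ∈ Subgroup.centralizer {m} := by
    have h1 : (⊤ : Subgroup G) ≤ Subgroup.centralizer {m} := by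
      rw [← hGA, actCommutator]
      refine (Subgroup.closure_le _).mpr ?_
      rintro x ⟨g, a, rfl⟩
      rw [SetLike.mem_coe, Subgroup.mem_centralizer_iff]
      rintro y ⟨rfl⟩
      have hconj : (a • g) * m * (a • g)⁻¹ = g * m * g⁻¹ := by
        have hy1 : g * m * g⁻¹ ∈ M := hM.conj_mem m hm g
        calc (a • g) * m * (a • g)⁻¹ = (a • g) * (a • m) * (a • g)⁻¹ := by
              rw [hfix a m hm]
          _ = a • (g * m * g⁻¹) := by rw [smul_mul', smul_mul', smul_inv']
          _ = g * m * g⁻¹ := hfix a _ hy1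
      calc m * (g⁻¹ * (a • g)) = g⁻¹ * (g * m * g⁻¹) * (a • g) := by group
        _ = g⁻¹ * ((a • g) * m * (a • g)⁻¹) * (a • g) := by rw [hconj]
        _ = (g⁻¹ * (a • g)) * m := by group
    intro x; exact h1 (Subgroup.mem_top x)
  have := Subgroup.mem_centralizer_iff.mp (key g) m rfl
  exact this.symm

section Lambda

theorem center_conj {z : G} (hz : z ∈ Subgroup.center G) (g : G) : g * z * g⁻¹ = z := by
  calc g * z * g⁻¹ = z * g * g⁻¹ := by rw [Subgroup.mem_center_iff.mp hz g]
    _ = z := by group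

variable {t : G}

theorem comm_mul_right (ht : ∀ x : G, ⁅t, x⁆ ∈ Subgroup.center G) (g h : G) :
    ⁅t, g * h⁆ = ⁅t, g⁆ * ⁅t, h⁆ := by
  calc ⁅t, g * h⁆ = ⁅t, g⁆ * (g * ⁅t, h⁆ * g⁻¹) := by
        simp only [commutatorElement_def]; group
    _ = ⁅t, g⁆ * ⁅t, h⁆ := by rw [center_conj (ht h) g]

theorem comm_one_right : ⁅t, (1 : G)⁆ = 1 := by
  simp only [commutatorElement_def]; group

theorem comm_inv_right (ht : ∀ x : G, ⁅t, x⁆ ∈ Subgroup.center G) (g : G) :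
    ⁅t, g⁻¹⁆ = ⁅t, g⁆⁻¹ := by
  have h := comm_mul_right ht g g⁻¹
  rw [mul_inv_cancel, comm_one_right] at h
  exact (inv_eq_of_mul_eq_one_right h.symm).symm

theorem comm_pow_right (ht : ∀ x : G, ⁅t, x⁆ ∈ Subgroup.center G) (g : G) (n : ℕ) :
    ⁅t, g ^ n⁆ = ⁅t, g⁆ ^ n := by
  induction n with
  | zero => simpa using comm_one_right
  | succ k ih => rw [pow_succ, comm_mul_right ht, ih, pow_succ]

theorem comm_eq_one_of_central {z : G} (hz : z ∈ Subgroup.center G) (g : G) : ⁅z, g⁆ = 1 := by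
  rw [commutatorElement_def, ← Subgroup.mem_center_iff.mp hz g]
  group

theorem comm_eq_one_of_central' {z : G} (hz : z ∈ Subgroup.center G) (g : G) : ⁅g, z⁆ = 1 := by
  rw [commutatorElement_def, Subgroup.mem_center_iff.mp hz g]
  group

theorem comm_commutator_right (ht : ∀ x : G, ⁅t, x⁆ ∈ Subgroup.center G) (g h : G) :
    ⁅t, ⁅g, h⁆⁆ = 1 := by
  have e : ⁅t, ⁅g, h⁆⁆ = ⁅t, g⁆ * ⁅t, h⁆ * ⁅t, g⁻¹⁆ * ⁅t, h⁻¹⁆ := by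
    rw [commutatorElement_def g h, comm_mul_right ht, comm_mul_right ht, comm_mul_right ht]
  rw [e, comm_inv_right ht, comm_inv_right ht]
  have hb : ⁅t, h⁆ * ⁅t, g⁆⁻¹ = ⁅t, g⁆⁻¹ * ⁅t, h⁆ :=
    Subgroup.mem_center_iff.mp (Subgroup.inv_mem _ (ht g)) ⁅t, h⁆
  calc ⁅t, g⁆ * ⁅t, h⁆ * ⁅t, g⁆⁻¹ * ⁅t, h⁆⁻¹
      = ⁅t, g⁆ * (⁅t, h⁆ * ⁅t, g⁆⁻¹) * ⁅t, h⁆⁻¹ := by group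
    _ = ⁅t, g⁆ * (⁅t, g⁆⁻¹ * ⁅t, h⁆) * ⁅t, h⁆⁻¹ := by rw [hb]
    _ = 1 := by group

theorem mul_comm_of_comm_eq_one {x y : G} (h : ⁅x, y⁆ = 1) : x * y = y * x := by
  rw [commutatorElement_def] at h
  have : x * y = (x * y * x⁻¹ * y⁻¹) * (y * x) := by group
  rw [this, h, one_mul]

theorem comm_pow_left (hc : ∀ u x : G, ⁅u, x⁆ ∈ Subgroup.center G) (g : G) (n : ℕ) :
    ⁅t ^ n, g⁆ = ⁅t, g⁆ ^ n := by
  induction n with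
  | zero => rw [pow_zero, pow_zero]; exact comm_eq_one_of_central (Subgroup.one_mem _) g
  | succ k ih =>
    have e : ⁅t ^ k * t, g⁆ = t ^ k * ⁅t, g⁆ * (t ^ k)⁻¹ * ⁅t ^ k, g⁆ := by
      simp only [commutatorElement_def]; group
    rw [pow_succ, e, center_conj (hc t g) (t ^ k), ih, ← pow_succ']

end Lambda

end CoprimeSpecial

namespace CoprimeSpecial

variable {A G : Type*} [Group A] [Group G] [MulDistribMulAction A G]

open Subgroup

/-- The intersection of the second centre with the derived subgroup, as a subgroup. -/
def zc2 (G : Type*) [Group G] : Subgroup G where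
  carrier := {t : G | t ∈ commutator G ∧ ∀ g : G, ⁅t, g⁆ ∈ Subgroup.center G}
  one_mem' := ⟨Subgroup.one_mem _, fun g => by
    rw [comm_eq_one_of_central (Subgroup.one_mem _) g]; exact Subgroup.one_mem _⟩
  mul_mem' := by
    rintro a b ⟨ha1, ha2⟩ ⟨hb1, hb2⟩
    refine ⟨Subgroup.mul_mem _ ha1 hb1, fun g => ?_⟩
    have e : ⁅a * b, g⁆ = a * ⁅b, g⁆ * a⁻¹ * ⁅a, g⁆ := by
      simp only [commutatorElement_def]; group
    rw [e]
    exact Subgroup.mul_mem _ ((inferInstance : (Subgroup.center G).Normal).conj_mem _ (hb2 g) a)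
      (ha2 g)
  inv_mem' := by
    rintro a ⟨ha1, ha2⟩
    refine ⟨Subgroup.inv_mem _ ha1, fun g => ?_⟩
    have e : ⁅a⁻¹, g⁆ = a⁻¹ * ⁅a, g⁆⁻¹ * a⁻¹⁻¹ := by
      simp only [commutatorElement_def]; group
    rw [e]
    exact (inferInstance : (Subgroup.center G).Normal).conj_mem _
      (Subgroup.inv_mem _ (ha2 g)) a⁻¹

theorem mem_zc2_iff {t : G} :
    t ∈ zc2 G ↔ t ∈ commutator G ∧ ∀ g : G, ⁅t, g⁆ ∈ Subgroup.center G := Iff.rfl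

theorem zc2_characteristic : (zc2 G).Characteristic := by
  rw [Subgroup.characteristic_iff_comap_eq]
  intro φ
  have hcomm := Subgroup.characteristic_iff_comap_eq.mp
    (by rw [commutator_def]; exact Subgroup.commutator_characteristic _ _ : (commutator G).Characteristic) φ
  have hcent := Subgroup.characteristic_iff_comap_eq.mp
    (Subgroup.centerCharacteristic (G := G)) φ
  ext t
  simp only [Subgroup.mem_comap, mem_zc2_iff]
  constructor
  · rintro ⟨h1, h2⟩
    constructor
    · rw [← hcomm]; exact h1
    · intro g
      have e : ⁅t, g⁆ = φ.symm (⁅φ t, φ g⁆) := by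
        rw [← map_commutatorElement]
        exact (φ.symm_apply_apply _).symm
      have : φ (⁅t, g⁆) ∈ Subgroup.center G := by
        rw [map_commutatorElement]; exact h2 (φ g)
      rw [← hcent]; exact this
  · rintro ⟨h1, h2⟩
    constructor
    · rw [← hcomm] at h1; exact h1
    · intro g
      have h3 := h2 (φ.symm g)
      rw [← hcent] at h3
      have h4 := Subgroup.mem_comap.mp h3
      rw [map_commutatorElement] at h4
      simpa using h4

theorem zc2_normal : (zc2 G).Normal := by
  haveI := zc2_characteristic (G := G)
  infer_instance

theorem zc2_abelian : ∀ x ∈ zc2 G, ∀ y ∈ zc2 G, x * y = y * x := by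
  rintro x ⟨hx1, hx2⟩ y ⟨hy1, _⟩
  have hcent : commutator G ≤ Subgroup.centralizer {x} := by
    rw [commutator_def, Subgroup.commutator_le]
    intro g _ h _
    rw [Subgroup.mem_centralizer_iff]
    rintro z ⟨rfl⟩
    exact mul_comm_of_comm_eq_one (comm_commutator_right hx2 g h)
  exact Subgroup.mem_centralizer_iff.mp (hcent hy1) x rfl

/-- Key step: the derived subgroup is central. -/
theorem commutator_le_center [Finite G] {p : ℕ} (hp : p.Prime) (hpG : IsPGroup p G)
    (hGA : actCommutator A G = ⊤)
    (hcent : ∀ U : Subgroup G, U.Characteristic → (∀ x ∈ U, ∀ y ∈ U, x * y = y * x) →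
      ∀ (a : A), ∀ u ∈ U, a • u = u) :
    commutator G ≤ Subgroup.center G := by
  haveI : Fact p.Prime := ⟨hp⟩
  have hzc2 : zc2 G ≤ Subgroup.center G :=
    le_center_of_fixed hGA (zc2 G) zc2_normal
      (fun a m hm => hcent (zc2 G) zc2_characteristic zc2_abelian a m hm)
  obtain ⟨n, hn⟩ := _root_.nilpotent_iff_lowerCentralSeries.mp hpG.isNilpotent
  have step : ∀ m, 1 ≤ m → (⊤ : Subgroup G).lowerCentralSeries (m + 1) ≤ Subgroup.center G →
      (⊤ : Subgroup G).lowerCentralSeries m ≤ Subgroup.center G := by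
    intro m hm hsucc t ht
    refine hzc2 ⟨?_, ?_⟩
    · rw [← top_lowerCentralSeries_one]
      exact Subgroup.lowerCentralSeries_antitone ⊤ hm ht
    · intro g
      refine hsucc ?_
      rw [Subgroup.lowerCentralSeries_succ]
      exact Subgroup.commutator_mem_commutator ht (Subgroup.mem_top g)
  have all : ∀ j m, 1 ≤ m → n ≤ m + j → (⊤ : Subgroup G).lowerCentralSeries m ≤ Subgroup.center G := by
    intro j
    induction j with
    | zero =>
      intro m _ hmn
      have h1 : (⊤ : Subgroup G).lowerCentralSeries m ≤ (⊤ : Subgroup G).lowerCentralSeries n :=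
        Subgroup.lowerCentralSeries_antitone ⊤ (by omega)
      rw [hn] at h1
      exact le_trans h1 bot_le
    | succ k ih =>
      intro m hm hmn
      by_cases h : n ≤ m + k
      · exact ih m hm h
      · exact step m hm (ih (m + 1) (by omega) (by omega))
  have := all n 1 (le_refl 1) (by omega)
  rwa [top_lowerCentralSeries_one] at this


/-- Coprime norm-map lemma: if `N` is a normal `A`-invariant subgroup with abelian
quotient and `G = [G,A]`, then every `A`-fixed element lies in `N`. -/
theorem fixed_mem_of_abelian_quotient [Finite A] [Finite G]
    (hcop : (Nat.card A).Coprime (Nat.card G)) (hGA : actCommutator A G = ⊤)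
    (N : Subgroup G) (hN : N.Normal) (hinv : ∀ (a : A) (x : G), x ∈ N → a • x ∈ N)
    (hab : ∀ g h : G, ⁅g, h⁆ ∈ N) {c : G} (hc : ∀ a : A, a • c = c) : c ∈ N := by
  haveI := hN
  letI : Fintype A := Fintype.ofFinite A
  have hcomm : ∀ x y : G ⧸ N, x * y = y * x := by
    intro x y
    induction x using QuotientGroup.induction_on with
    | H g =>
    induction y using QuotientGroup.induction_on with
    | H h =>
    show ((g : G ⧸ N) * (h : G ⧸ N)) = ((h : G ⧸ N) * (g : G ⧸ N))
    rw [← QuotientGroup.mk_mul, ← QuotientGroup.mk_mul]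
    rw [QuotientGroup.eq]
    have : (g * h)⁻¹ * (h * g) = ⁅h⁻¹, g⁻¹⁆ := by
      simp only [commutatorElement_def]; group
    rw [this]
    exact hab h⁻¹ g⁻¹
  letI : CommGroup (G ⧸ N) := { (inferInstance : Group (G ⧸ N)) with mul_comm := hcomm }
  set π : G →* G ⧸ N := QuotientGroup.mk' N with hπ
  set ν : G →* G ⧸ N :=
    { toFun := fun g => ∏ a : A, π (a • g)
      map_one' := by simp
      map_mul' := by
        intro x y
        simp only [smul_mul', map_mul]
        rw [Finset.prod_mul_distrib] } with hν
  have hν_smul : ∀ (b : A) (g : G), ν (b • g) = ν g := by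
    intro b g
    show (∏ a : A, π (a • b • g)) = ∏ a : A, π (a • g)
    have h1 : ∀ a : A, π (a • b • g) = π ((a * b) • g) := by
      intro a; rw [smul_smul]
    simp only [h1]
    exact Fintype.prod_equiv (Equiv.mulRight b) _ _ (fun a => rfl)
  have hν_one : ∀ x : G, ν x = 1 := by
    have hle : (⊤ : Subgroup G) ≤ ν.ker := by
      rw [← hGA, actCommutator]
      refine (Subgroup.closure_le _).mpr ?_
      rintro x ⟨g, a, rfl⟩
      rw [SetLike.mem_coe, MonoidHom.mem_ker, map_mul, map_inv, hν_smul a g, inv_mul_cancel]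
    intro x
    exact hle (Subgroup.mem_top x)
  have hc2 : ν c = (π c) ^ Fintype.card A := by
    show (∏ _a : A, π (_a • c)) = (π c) ^ Fintype.card A
    rw [Finset.prod_congr rfl (fun a _ => by rw [hc a])]
    rw [Finset.prod_const, Finset.card_univ]
  have hpow : (π c) ^ Nat.card A = 1 := by
    rw [Nat.card_eq_fintype_card, ← hc2, hν_one]
  have hd1 : orderOf (π c) ∣ Nat.card A := orderOf_dvd_of_pow_eq_one hpow
  have hd2 : orderOf (π c) ∣ Nat.card G := by
    refine dvd_trans (orderOf_dvd_natCard (π c)) ?_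
    rw [Subgroup.card_eq_card_quotient_mul_card_subgroup N]
    exact Dvd.intro _ rfl
  have : orderOf (π c) ∣ 1 := by
    have := Nat.dvd_gcd hd1 hd2
    rwa [Nat.Coprime.gcd_eq_one hcop] at this
  have h1 : π c = 1 := by
    have := Nat.dvd_one.mp this
    rw [← pow_one (π c), ← this, pow_orderOf_eq_one]
  exact (QuotientGroup.eq_one_iff c).mp h1

/-- In a nontrivial finite `p`-group there is an element `z ≠ 1` with `z ^ p = 1`. -/
theorem exists_ne_one_pow_eq_one {Q : Type*} [Group Q] {p : ℕ} (hp : p.Prime)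
    (hQ : IsPGroup p Q) {q : Q} (hq : q ≠ 1) : ∃ z : Q, z ≠ 1 ∧ z ^ p = 1 := by
  obtain ⟨k, hk⟩ := hQ q
  induction k generalizing q with
  | zero =>
    rw [pow_zero, pow_one] at hk
    exact absurd hk hq
  | succ n ih =>
    by_cases hqp : q ^ p = 1
    · exact ⟨q, hq, hqp⟩
    · exact ih hqp (by rw [← pow_mul, ← pow_succ']; exact hk)

/-- Facts about maximal subgroups of a finite `p`-group. -/
theorem coatom_facts [Finite G] {p : ℕ} (hp : p.Prime) (hpG : IsPGroup p G)
    {M : Subgroup G} (hM : IsCoatom M) :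
    M.Normal ∧ (∀ g h : G, ⁅g, h⁆ ∈ M) ∧ (∀ g : G, g ^ p ∈ M) := by
  haveI : Fact p.Prime := ⟨hp⟩
  haveI hnil : Group.IsNilpotent G := hpG.isNilpotent
  have hnorm : M.Normal := NormalizerCondition.normal_of_coatom M
    normalizerCondition_of_isNilpotent hM
  haveI := hnorm
  have hQp : IsPGroup p (G ⧸ M) := hpG.to_quotient M
  obtain ⟨x, hx⟩ : ∃ x : G, x ∉ M := by
    by_contra h
    push_neg at h
    exact hM.1 ((Subgroup.eq_top_iff' M).mpr h)
  have hx1 : ((x : G ⧸ M)) ≠ 1 := fun h => hx ((QuotientGroup.eq_one_iff x).mp h)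
  obtain ⟨z, hz1, hzp⟩ := exists_ne_one_pow_eq_one hp hQp hx1
  -- every subgroup of the quotient is ⊥ or ⊤
  have honly : ∀ K : Subgroup (G ⧸ M), K = ⊥ ∨ K = ⊤ := by
    intro K
    have h1 : M ≤ K.comap (QuotientGroup.mk' M) := by
      intro m hm
      have : (QuotientGroup.mk' M) m = 1 := (QuotientGroup.eq_one_iff m).mpr hm
      rw [Subgroup.mem_comap, this]
      exact K.one_mem
    rcases eq_or_lt_of_le h1 with heq | hlt
    · left
      have h2 : K = Subgroup.map (QuotientGroup.mk' M) (K.comap (QuotientGroup.mk' M)) :=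
        (Subgroup.map_comap_eq_self_of_surjective (QuotientGroup.mk'_surjective M) K).symm
      rw [h2, ← heq]
      rw [Subgroup.map_eq_bot_iff, QuotientGroup.ker_mk']
    · right
      have h2 := hM.2 _ hlt
      have h3 : K = Subgroup.map (QuotientGroup.mk' M) (K.comap (QuotientGroup.mk' M)) :=
        (Subgroup.map_comap_eq_self_of_surjective (QuotientGroup.mk'_surjective M) K).symm
      rw [h3, h2]
      exact Subgroup.map_top_of_surjective _ (QuotientGroup.mk'_surjective M)
  have hzt : Subgroup.zpowers z = ⊤ :=
    (honly _).resolve_left (fun h => hz1 (Subgroup.zpowers_eq_bot.mp h))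
  have hall : ∀ q : G ⧸ M, ∃ i : ℤ, z ^ i = q := by
    intro q
    have : q ∈ Subgroup.zpowers z := hzt ▸ Subgroup.mem_top q
    exact Subgroup.mem_zpowers_iff.mp this
  refine ⟨hnorm, ?_, ?_⟩
  · intro g h
    rw [← QuotientGroup.eq_one_iff]
    obtain ⟨i, hi⟩ := hall (g : G ⧸ M)
    obtain ⟨j, hj⟩ := hall (h : G ⧸ M)
    show ((⁅g, h⁆ : G) : G ⧸ M) = 1
    have : ((⁅g, h⁆ : G) : G ⧸ M) = ⁅((g : G) : G ⧸ M), ((h : G) : G ⧸ M)⁆ := rfl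
    rw [this, ← hi, ← hj, commutatorElement_def]
    group
  · intro g
    rw [← QuotientGroup.eq_one_iff]
    obtain ⟨i, hi⟩ := hall (g : G ⧸ M)
    show ((g : G) : G ⧸ M) ^ p = 1
    rw [← hi]
    calc (z ^ i) ^ p = z ^ (i * (p : ℤ)) := by rw [← zpow_natCast (z ^ i) p, ← zpow_mul]
      _ = (z ^ (p : ℤ)) ^ i := by rw [mul_comm, zpow_mul]
      _ = 1 := by rw [zpow_natCast, hzp, one_zpow]


theorem mem_frattini_of_mem_coatoms [Finite G] {x : G}
    (hx : ∀ M : Subgroup G, IsCoatom M → x ∈ M) : x ∈ frattini G := by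
  rw [frattini, Order.radical]
  simp only [Subgroup.mem_iInf, Set.mem_setOf_eq]
  intro M hM
  exact hx M hM

/-- If `N` contains all commutators and all `p`-th powers, then `frattini G ≤ N`. -/
theorem frattini_le_of_pow_comm [Finite G] {p : ℕ} (hp : p.Prime) (N : Subgroup G)
    (hcomm : ∀ g h : G, ⁅g, h⁆ ∈ N) (hpow : ∀ g : G, g ^ p ∈ N) : frattini G ≤ N := by
  haveI : Fact p.Prime := ⟨hp⟩
  by_contra hnot
  obtain ⟨v, hvf, hvN⟩ := SetLike.not_le_iff_exists.mp hnot
  set s : Set (Subgroup G) := {M | N ≤ M ∧ v ∉ M} with hs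
  have hsne : s.Nonempty := ⟨N, le_refl _, hvN⟩
  obtain ⟨M, hMs, hMmax⟩ := Set.Finite.exists_maximalFor id s (Set.toFinite s) hsne
  have hNM : N ≤ M := hMs.1
  have hvM : v ∉ M := hMs.2
  have hcommM : ∀ g h : G, ⁅g, h⁆ ∈ M := fun g h => hNM (hcomm g h)
  have hpowM : ∀ g : G, g ^ p ∈ M := fun g => hNM (hpow g)
  have hMnormal : M.Normal := by
    constructor
    intro x hxM g
    have e : g * x * g⁻¹ = ⁅g, x⁆ * x := by simp only [commutatorElement_def]; group
    rw [e]
    exact M.mul_mem (hcommM g x) hxM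
  haveI := hMnormal
  have hgrow : ∀ X : Subgroup G, M < X → v ∈ X := by
    intro X hMX
    by_contra hvX
    have hXs : X ∈ s := ⟨le_trans hNM hMX.le, hvX⟩
    exact (ne_of_lt hMX) (le_antisymm hMX.le (hMmax hXs hMX.le))
  set π : G →* G ⧸ M := QuotientGroup.mk' M with hπ
  have hmem_ne : ∀ g : G, g ∉ M → π g ≠ 1 :=
    fun g hg h => hg ((QuotientGroup.eq_one_iff g).mp h)
  have hpow1 : ∀ g : G, (π g) ^ p = 1 := by
    intro g
    rw [← map_pow]
    exact (QuotientGroup.eq_one_iff _).mpr (hpowM g)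
  have hord : ∀ g : G, g ∉ M → orderOf (π g) = p :=
    fun g hg => orderOf_eq_prime (hpow1 g) (hmem_ne g hg)
  -- for g ∉ M, π v ∈ zpowers (π g), and then zpowers (π v) = zpowers (π g)
  have hkey : ∀ g : G, g ∉ M → Subgroup.zpowers (π g) = Subgroup.zpowers (π v) := by
    intro g hg
    have h1 : v ∈ M ⊔ Subgroup.zpowers g := by
      refine hgrow _ ?_
      refine lt_of_le_of_ne le_sup_left ?_
      intro h
      exact hg (h ▸ Subgroup.mem_sup_right (Subgroup.mem_zpowers g))
    have h2 : π v ∈ Subgroup.map π (M ⊔ Subgroup.zpowers g) :=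
      Subgroup.mem_map_of_mem π h1
    rw [Subgroup.map_sup, MonoidHom.map_zpowers] at h2
    have h3 : Subgroup.map π M = ⊥ := by
      rw [Subgroup.map_eq_bot_iff, QuotientGroup.ker_mk']
    rw [h3, bot_sup_eq] at h2
    have h4 : Subgroup.zpowers (π v) ≤ Subgroup.zpowers (π g) :=
      Subgroup.zpowers_le.mpr h2
    refine (Subgroup.eq_of_le_of_card_ge h4 ?_).symm
    rw [Nat.card_zpowers, Nat.card_zpowers, hord g hg, hord v hvM]
  have hcoatom : IsCoatom M := by
    constructor
    · intro h
      exact hvM (h ▸ Subgroup.mem_top v)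
    · intro X hMX
      obtain ⟨x, hxX, hxM⟩ := SetLike.exists_of_lt hMX
      rw [Subgroup.eq_top_iff']
      intro g
      by_cases hgM : g ∈ M
      · exact hMX.le hgM
      · have h5 : π g ∈ Subgroup.zpowers (π x) := by
          rw [hkey x hxM, ← hkey g hgM]
          exact Subgroup.mem_zpowers _
        obtain ⟨k, hk⟩ := Subgroup.mem_zpowers_iff.mp h5
        have h6 : π (x ^ k) = π g := by rw [map_zpow]; exact hk
        have h7 : (x ^ k)⁻¹ * g ∈ M := by
          have : π ((x ^ k)⁻¹ * g) = 1 := by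
            rw [map_mul, map_inv, h6, inv_mul_cancel]
          exact (QuotientGroup.eq_one_iff _).mp this
        have : g = x ^ k * ((x ^ k)⁻¹ * g) := by group
        rw [this]
        exact X.mul_mem (X.zpow_mem hxX k) (hMX.le h7)
  exact hvM (frattini_le_coatom hcoatom hvf)


/-- The centre of the Frattini subgroup (as a subgroup of `G`). -/
def frattiniCenter (G : Type*) [Group G] : Subgroup G :=
  frattini G ⊓ Subgroup.centralizer ↑(frattini G)

theorem mem_frattiniCenter_iff {x : G} :
    x ∈ frattiniCenter G ↔ x ∈ frattini G ∧ ∀ h ∈ frattini G, h * x = x * h := by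
  rw [frattiniCenter, Subgroup.mem_inf, Subgroup.mem_centralizer_iff]
  simp only [SetLike.mem_coe]

theorem frattiniCenter_characteristic : (frattiniCenter G).Characteristic := by
  rw [Subgroup.characteristic_iff_comap_eq]
  intro φ
  have hf := Subgroup.characteristic_iff_comap_eq.mp (frattini_characteristic (G := G)) φ
  have hfmem : ∀ y : G, y ∈ frattini G ↔ φ y ∈ frattini G := by
    intro y
    conv_lhs => rw [← hf]
    rw [Subgroup.mem_comap]
    rfl
  ext x
  simp only [Subgroup.mem_comap, mem_frattiniCenter_iff]
  constructor
  · rintro ⟨h1, h2⟩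
    refine ⟨(hfmem x).mpr h1, ?_⟩
    intro h hh
    have hfh : φ.toMonoidHom h ∈ frattini G := (hfmem h).mp hh
    have := h2 _ hfh
    have e : φ (h * x) = φ (x * h) := by
      rw [map_mul, map_mul]; exact this
    exact φ.injective e
  · rintro ⟨h1, h2⟩
    refine ⟨(hfmem x).mp h1, ?_⟩
    intro h hh
    have hsh : φ.symm h ∈ frattini G := by
      rw [hfmem (φ.symm h)]
      show φ (φ.symm h) ∈ frattini G
      rw [φ.apply_symm_apply]
      exact hh
    have := h2 (φ.symm h) hsh
    calc h * φ.toMonoidHom x = φ (φ.symm h * x) := by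
          rw [map_mul, φ.apply_symm_apply]; rfl
      _ = φ (x * φ.symm h) := by rw [this]
      _ = φ.toMonoidHom x * h := by rw [map_mul, φ.apply_symm_apply]; rfl

theorem frattiniCenter_normal : (frattiniCenter G).Normal := by
  haveI := frattiniCenter_characteristic (G := G)
  infer_instance

theorem frattiniCenter_abelian : ∀ x ∈ frattiniCenter G, ∀ y ∈ frattiniCenter G,
    x * y = y * x := by
  intro x hx y hy
  rw [mem_frattiniCenter_iff] at hx hy
  exact (hx.2 y hy.1).symm ▸ (hy.2 x hx.1)

/-- Key step: the Frattini subgroup is central. -/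
theorem frattini_le_center [Finite G] {p : ℕ} (hp : p.Prime) (hpG : IsPGroup p G)
    (hGA : actCommutator A G = ⊤)
    (hcent : ∀ U : Subgroup G, U.Characteristic → (∀ x ∈ U, ∀ y ∈ U, x * y = y * x) →
      ∀ (a : A), ∀ u ∈ U, a • u = u)
    (hc2 : ∀ g h : G, ⁅g, h⁆ ∈ Subgroup.center G) :
    frattini G ≤ Subgroup.center G := by
  haveI : Fact p.Prime := ⟨hp⟩
  have hc2' : ∀ t g : G, ⁅t, g⁆ ∈ Subgroup.center G := fun t g => hc2 t g
  -- any element of the Frattini subgroup whose p-th power is central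
  -- centralizes the whole Frattini subgroup
  have hkey : ∀ t : G, t ∈ frattini G → t ^ p ∈ Subgroup.center G →
      t ∈ frattiniCenter G := by
    intro t ht htp
    have hle : frattini G ≤ Subgroup.centralizer {t} := by
      refine frattini_le_of_pow_comm hp _ ?_ ?_
      · intro g h
        rw [Subgroup.mem_centralizer_iff]
        rintro y ⟨rfl⟩
        exact mul_comm_of_comm_eq_one (comm_commutator_right (fun x => hc2 t x) g h)
      · intro g
        rw [Subgroup.mem_centralizer_iff]
        rintro y ⟨rfl⟩
        refine mul_comm_of_comm_eq_one ?_
        rw [comm_pow_right (fun x => hc2 t x) g p, ← comm_pow_left hc2' g p]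
        exact comm_eq_one_of_central htp g
    rw [mem_frattiniCenter_iff]
    refine ⟨ht, ?_⟩
    intro h hh
    have := Subgroup.mem_centralizer_iff.mp (hle hh) t rfl
    exact this.symm
  have hW : frattiniCenter G ≤ Subgroup.center G :=
    le_center_of_fixed hGA _ frattiniCenter_normal
      (fun a m hm => hcent _ frattiniCenter_characteristic frattiniCenter_abelian a m hm)
  by_contra hnot
  obtain ⟨w, hwf, hwc⟩ := SetLike.not_le_iff_exists.mp hnot
  set H := frattini G with hH
  set K := (Subgroup.center G).subgroupOf H with hK
  have hKnorm : K.Normal := by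
    constructor
    intro x hx g
    rw [Subgroup.mem_subgroupOf] at hx ⊢
    have e : ((g * x * g⁻¹ : H) : G) = (g : G) * (x : G) * (g : G)⁻¹ := rfl
    rw [e, center_conj hx]
    exact hx
  haveI := hKnorm
  have hpH : IsPGroup p H := hpG.to_subgroup H
  have hpQ : IsPGroup p (H ⧸ K) := hpH.to_quotient K
  have hq : (((⟨w, hwf⟩ : H) : H ⧸ K)) ≠ 1 := by
    intro h
    have := (QuotientGroup.eq_one_iff _).mp h
    rw [Subgroup.mem_subgroupOf] at this
    exact hwc this
  obtain ⟨z, hz1, hzp⟩ := exists_ne_one_pow_eq_one hp hpQ hq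
  obtain ⟨t, ht⟩ := QuotientGroup.mk'_surjective K z
  have htnc : (t : G) ∉ Subgroup.center G := by
    intro h
    refine hz1 ?_
    rw [← ht]
    refine (QuotientGroup.eq_one_iff _).mpr ?_
    rw [Subgroup.mem_subgroupOf]
    exact h
  have htp : (t : G) ^ p ∈ Subgroup.center G := by
    have : ((t ^ p : H) : H ⧸ K) = 1 := by
      rw [← hzp, ← ht]
      rfl
    have h2 := (QuotientGroup.eq_one_iff _).mp this
    rw [Subgroup.mem_subgroupOf] at h2
    exact h2
  exact htnc (hW (hkey (t : G) t.2 htp))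

end CoprimeSpecial

/-- Suppose a finite group `A` acts coprimely on a finite `p`-group `G`, `A`
centralizes every characteristic abelian subgroup of `G`, and `G = [G, A]`.
Then `G' = Φ(G) = Z(G) = C_G(A)`. -/
theorem derived_eq_frattini_eq_center_eq_fixedPoints
    {A G : Type*} [Group A] [Group G] [Finite A] [Finite G] [MulDistribMulAction A G]
    (p : ℕ) (hp : p.Prime) (hpG : IsPGroup p G)
    (hcop : (Nat.card A).Coprime (Nat.card G))
    (hsol : IsSolvable A ∨ IsSolvable G)
    (hcent : ∀ U : Subgroup G, U.Characteristic → (∀ x ∈ U, ∀ y ∈ U, x * y = y * x) →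
      ∀ (a : A), ∀ u ∈ U, a • u = u)
    (hGA : actCommutator A G = ⊤) :
    commutator G = frattini G ∧ frattini G = Subgroup.center G ∧
      Subgroup.center G = ⨅ a : A, fixedSub G a := by
  haveI : Fact p.Prime := ⟨hp⟩
  have habZ : ∀ x ∈ Subgroup.center G, ∀ y ∈ Subgroup.center G, x * y = y * x :=
    fun x hx y _ => (Subgroup.mem_center_iff.mp hx y).symm
  have hfixZ : ∀ (a : A), ∀ z ∈ Subgroup.center G, a • z = z :=
    hcent (Subgroup.center G) Subgroup.centerCharacteristic habZ
  have hc2 : commutator G ≤ Subgroup.center G :=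
    CoprimeSpecial.commutator_le_center hp hpG hGA hcent
  have hc2' : ∀ g h : G, ⁅g, h⁆ ∈ Subgroup.center G := fun g h =>
    hc2 (Subgroup.commutator_mem_commutator (Subgroup.mem_top g) (Subgroup.mem_top h))
  have hΦZ : frattini G ≤ Subgroup.center G :=
    CoprimeSpecial.frattini_le_center hp hpG hGA hcent hc2'
  have hcommΦ : ∀ g h : G, ⁅g, h⁆ ∈ frattini G := fun g h =>
    CoprimeSpecial.mem_frattini_of_mem_coatoms
      (fun M hM => (CoprimeSpecial.coatom_facts hp hpG hM).2.1 g h)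
  have hfixΦ : ∀ c : G, (∀ a : A, a • c = c) → c ∈ frattini G := by
    intro c hc
    exact CoprimeSpecial.fixed_mem_of_abelian_quotient hcop hGA (frattini G) inferInstance
      (fun a x hx => CoprimeSpecial.smul_mem_of_characteristic _ inferInstance a hx)
      hcommΦ hc
  have hfixC' : ∀ c : G, (∀ a : A, a • c = c) → c ∈ commutator G := by
    intro c hc
    refine CoprimeSpecial.fixed_mem_of_abelian_quotient hcop hGA (commutator G) inferInstance
      (fun a x hx => CoprimeSpecial.smul_mem_of_characteristic _ inferInstance a hx)
      (fun g h => ?_) hc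
    exact Subgroup.commutator_mem_commutator (Subgroup.mem_top g) (Subgroup.mem_top h)
  have hZΦ : Subgroup.center G ≤ frattini G := fun z hz => hfixΦ z (fun a => hfixZ a z hz)
  have hZC : Subgroup.center G ≤ commutator G := fun z hz => hfixC' z (fun a => hfixZ a z hz)
  refine ⟨?_, ?_, ?_⟩
  · refine le_antisymm ?_ (le_trans hΦZ hZC)
    rw [commutator_def, Subgroup.commutator_le]
    intro g _ h _
    exact hcommΦ g h
  · exact le_antisymm hΦZ hZΦ
  · refine le_antisymm ?_ ?_
    · intro z hz
      rw [Subgroup.mem_iInf]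
      intro a
      exact CoprimeSpecial.mem_fixedSub_iff.mpr (hfixZ a z hz)
    · intro c hc
      rw [Subgroup.mem_iInf] at hc
      exact hΦZ (hfixΦ c (fun a => CoprimeSpecial.mem_fixedSub_iff.mp (hc a)))
end
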